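/- arXiv:0902.1435 — 5 statements merged into one kernel-verified Lean document; each statement's English description precedes it below -/
import Mathlib

section
/- In a t-diagram with d ≥ 1 (i.e., a configuration of d+3 black points in convex position and d+1 white points inside, in general position, with exactly one white point inside each triangle with black vertices), every white point lies inside at most two boundary triangles A_{i-1}A_iA_{i+1}. -/
/-- A t-diagram with parameter `d`: `d+3` black points in convex position in the plane
(in the cyclic order given by the indices), `d+1` white points inside their convex hull,
all points in general position, and every triangle with black vertices containing
exactly one white point in its interior. -/
structure TDiagram (d : ℕ) where
  black : Fin (d + 3) → ℝ × ℝ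
  white : Fin (d + 1) → ℝ × ℝ
  inj : Function.Injective (Sum.elim black white : Fin (d + 3) ⊕ Fin (d + 1) → ℝ × ℝ)
  genPos : ∀ x y z : Fin (d + 3) ⊕ Fin (d + 1), x ≠ y → x ≠ z → y ≠ z →
    ¬ Collinear ℝ {Sum.elim black white x, Sum.elim black white y, Sum.elim black white z}
  edgeOrder : ∀ i : Fin (d + 3), ∃ f : (ℝ × ℝ) →ₗ[ℝ] ℝ, ∃ c : ℝ,
    f (black i) = c ∧ f (black (i + 1)) = c ∧
    ∀ j : Fin (d + 3), j ≠ i → j ≠ i + 1 → f (black j) < c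
  whiteInside : ∀ w : Fin (d + 1), white w ∈ convexHull ℝ (Set.range black)
  onePerTriangle : ∀ i j k : Fin (d + 3), i ≠ j → i ≠ k → j ≠ k →
    ∃! w : Fin (d + 1), white w ∈ interior (convexHull ℝ {black i, black j, black k})

/-- The (open) boundary triangle `A_{i-1} A_i A_{i+1}` of the black vertex `A_i`. -/
def TDiagram.bTri {d : ℕ} (X : TDiagram d) (i : Fin (d + 3)) : Set (ℝ × ℝ) :=
  interior (convexHull ℝ {X.black (i - 1), X.black i, X.black (i + 1)})

section Aux


def det2 (u v : ℝ × ℝ) : ℝ := u.1 * v.2 - u.2 * v.1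

def lfun (u : ℝ × ℝ) : (ℝ × ℝ) →ₗ[ℝ] ℝ where
  toFun x := det2 u x
  map_add' x y := by simp [det2]; ring
  map_smul' t x := by simp [det2]; ring

lemma lfun_apply (u x : ℝ × ℝ) : lfun u x = det2 u x := rfl

lemma exists_smul_of_det2_eq_zero {u v : ℝ × ℝ} (hu : u ≠ 0) (h : det2 u v = 0) :
    ∃ t : ℝ, v = t • u := by
  have hd : u.1 * v.2 = u.2 * v.1 := by unfold det2 at h; linarith
  by_cases h1 : u.1 = 0
  · have h2 : u.2 ≠ 0 := fun h2 => hu (Prod.ext h1 h2)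
    have hv1 : v.1 = 0 := by
      have : u.2 * v.1 = 0 := by rw [← hd, h1]; ring
      exact (mul_eq_zero.mp this).resolve_left h2
    refine ⟨v.2 / u.2, Prod.ext ?_ ?_⟩
    · simp [h1, hv1]
    · simp; field_simp
  · refine ⟨v.1 / u.1, Prod.ext ?_ ?_⟩
    · simp; field_simp
    · simp; field_simp; linarith

lemma collinear_of_det2_eq_zero {P Q R : ℝ × ℝ} (h : det2 (Q - P) (R - P) = 0) :
    Collinear ℝ ({P, Q, R} : Set (ℝ × ℝ)) := by
  by_cases hu : Q - P = 0
  · have hQP : Q = P := by rwa [sub_eq_zero] at hu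
    have hset : ({P, Q, R} : Set (ℝ × ℝ)) = {P, R} := by rw [hQP]; simp
    rw [hset]
    exact collinear_pair ℝ P R
  · rw [collinear_iff_of_mem (Set.mem_insert P {Q, R})]
    refine ⟨Q - P, fun p hp => ?_⟩
    simp only [Set.mem_insert_iff, Set.mem_singleton_iff] at hp
    rcases hp with hp | hp | hp
    · exact ⟨0, by simp [hp]⟩
    · exact ⟨1, by simp [hp]⟩
    · obtain ⟨t, ht⟩ := exists_smul_of_det2_eq_zero hu h
      refine ⟨t, ?_⟩
      rw [hp]
      simpa [vadd_eq_add] using sub_eq_iff_eq_add.mp ht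

lemma det2_ne_zero_of_not_collinear {P Q R : ℝ × ℝ}
    (h : ¬ Collinear ℝ ({P, Q, R} : Set (ℝ × ℝ))) : det2 (Q - P) (R - P) ≠ 0 :=
  fun h0 => h (collinear_of_det2_eq_zero h0)

lemma collinear_of_level {f : (ℝ × ℝ) →ₗ[ℝ] ℝ} {c : ℝ} {P Q W z : ℝ × ℝ}
    (hP : f P = c) (hQ : f Q = c) (hW : f W = c) (hz : f z ≠ c) :
    Collinear ℝ ({P, Q, W} : Set (ℝ × ℝ)) := by
  apply collinear_of_det2_eq_zero
  have hfe : ∀ p : ℝ × ℝ, f p = f (1, 0) * p.1 + f (0, 1) * p.2 := by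
    intro p
    have hp : p = p.1 • ((1:ℝ), (0:ℝ)) + p.2 • ((0:ℝ), (1:ℝ)) := by
      apply Prod.ext <;> simp
    conv_lhs => rw [hp]
    rw [map_add, map_smul, map_smul, smul_eq_mul, smul_eq_mul]
    ring
  have hQ' : f (1,0) * (Q - P).1 + f (0,1) * (Q - P).2 = 0 := by
    have h0 : f (Q - P) = 0 := by rw [map_sub, hP, hQ, sub_self]
    rw [hfe] at h0; linarith
  have hW' : f (1,0) * (W - P).1 + f (0,1) * (W - P).2 = 0 := by
    have h0 : f (W - P) = 0 := by rw [map_sub, hP, hW, sub_self]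
    rw [hfe] at h0; linarith
  unfold det2
  rcases eq_or_ne (f ((1:ℝ),(0:ℝ))) 0 with h1 | h1
  · rcases eq_or_ne (f ((0:ℝ),(1:ℝ))) 0 with h2 | h2
    · exfalso
      apply hz
      rw [hfe z, h1, h2, ← hP, hfe P, h1, h2]
      ring
    · have ha : (Q - P).2 = 0 := by
        have h0 : f (0,1) * (Q - P).2 = 0 := by linear_combination hQ' - (Q - P).1 * h1
        exact (mul_eq_zero.mp h0).resolve_left h2
      have hb : (W - P).2 = 0 := by
        have h0 : f (0,1) * (W - P).2 = 0 := by linear_combination hW' - (W - P).1 * h1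
        exact (mul_eq_zero.mp h0).resolve_left h2
      rw [ha, hb]; ring
  · have key : f (1,0) * ((Q - P).1 * (W - P).2 - (Q - P).2 * (W - P).1) = 0 := by
      linear_combination (W - P).2 * hQ' - (Q - P).2 * hW'
    exact (mul_eq_zero.mp key).resolve_left h1

lemma bary {P Q R M : ℝ × ℝ} (hD : det2 (Q - P) (R - P) ≠ 0) :
    M = (1 - det2 (M - P) (R - P) / det2 (Q - P) (R - P)
          - det2 (Q - P) (M - P) / det2 (Q - P) (R - P)) • P
        + (det2 (M - P) (R - P) / det2 (Q - P) (R - P)) • Q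
        + (det2 (Q - P) (M - P) / det2 (Q - P) (R - P)) • R := by
  obtain ⟨p1, p2⟩ := P; obtain ⟨q1, q2⟩ := Q; obtain ⟨r1, r2⟩ := R; obtain ⟨m1, m2⟩ := M
  unfold det2 at *
  simp only [Prod.fst_sub, Prod.snd_sub] at hD ⊢
  apply Prod.ext
  · simp only [Prod.fst_add, Prod.smul_fst, smul_eq_mul]
    linear_combination (p1 - m1) * mul_inv_cancel₀ hD
  · simp only [Prod.snd_add, Prod.smul_snd, smul_eq_mul]
    linear_combination (p2 - m2) * mul_inv_cancel₀ hD

lemma lin_comb (φ : (ℝ × ℝ) →ₗ[ℝ] ℝ) {α β γ : ℝ} {P Q R M : ℝ × ℝ}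
    (h : M = α • P + β • Q + γ • R) :
    φ M = α * φ P + β * φ Q + γ * φ R := by
  rw [h, map_add, map_add, map_smul, map_smul, map_smul]
  simp [smul_eq_mul]

lemma fin_one_ne (d : ℕ) : (1 : Fin (d + 3)) ≠ 0 := by
  intro h
  have h2 := congrArg Fin.val h
  have h0 : ((0 : Fin (d + 3)) : ℕ) = 0 := rfl
  rw [Fin.val_one, h0] at h2
  omega

lemma fin_two_ne (d : ℕ) : (1 + 1 : Fin (d + 3)) ≠ 0 := by
  intro h
  have h2 := congrArg Fin.val h
  have h0 : ((0 : Fin (d + 3)) : ℕ) = 0 := rfl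
  rw [Fin.val_add, Fin.val_one, h0, Nat.mod_eq_of_lt (show 1 + 1 < d + 3 by omega)] at h2
  omega

lemma fin_three_ne (d : ℕ) (hd : 1 ≤ d) : (1 + 1 + 1 : Fin (d + 3)) ≠ 0 := by
  intro h
  have h2 := congrArg Fin.val h
  have h0 : ((0 : Fin (d + 3)) : ℕ) = 0 := rfl
  simp only [Fin.val_add, Fin.val_one, h0] at h2
  rw [Nat.mod_eq_of_lt (show 1 + 1 < d + 3 by omega),
    Nat.mod_eq_of_lt (show 1 + 1 + 1 < d + 3 by omega)] at h2
  omega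

lemma det2_self (u : ℝ × ℝ) : det2 u u = 0 := by unfold det2; ring

lemma det2_sub (u x y : ℝ × ℝ) : det2 u (x - y) = det2 u x - det2 u y := by
  simp [det2, Prod.fst_sub, Prod.snd_sub]; ring

end Aux

lemma TDiagram.diag {d : ℕ} (hd : 1 ≤ d) (X : TDiagram d) (a : Fin (d + 3)) :
    ∃ f : (ℝ × ℝ) →ₗ[ℝ] ℝ, ∃ c : ℝ,
      f (X.black (a - 1)) = c ∧ f (X.black (a + 1)) = c ∧ c < f (X.black a) ∧
      ∀ m : Fin (d + 3), m ≠ a - 1 → m ≠ a → m ≠ a + 1 → f (X.black m) < c := by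
  have hne1 : a - 1 ≠ a := fun h => fin_one_ne d (by open Fin.CommRing in linear_combination -h)
  have hne2 : a - 1 ≠ a + 1 := fun h => fin_two_ne d (by open Fin.CommRing in linear_combination -h)
  have hne3 : a ≠ a + 1 := fun h => fin_one_ne d (by open Fin.CommRing in linear_combination -h)
  set P := X.black (a - 1) with hPdef
  set Q := X.black (a + 1) with hQdef
  set R := X.black a with hRdef
  have hPQR : ¬ Collinear ℝ ({P, Q, R} : Set (ℝ × ℝ)) := by
    have := X.genPos (.inl (a - 1)) (.inl (a + 1)) (.inl a)
      (by simpa using hne2) (by simpa using hne1) (by simpa using hne3.symm)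
    simpa using this
  have hD : det2 (Q - P) (R - P) ≠ 0 := det2_ne_zero_of_not_collinear hPQR
  have key : ∀ m : Fin (d + 3), m ≠ a - 1 → m ≠ a → m ≠ a + 1 →
      det2 (Q - P) (X.black m - P) / det2 (Q - P) (R - P) < 0 := by
    intro m hm1 hm2 hm3
    set M := X.black m with hMdef
    have hPQM : ¬ Collinear ℝ ({P, Q, M} : Set (ℝ × ℝ)) := by
      have := X.genPos (.inl (a - 1)) (.inl (a + 1)) (.inl m)
        (by simpa using hne2) (by simpa using (Ne.symm hm1)) (by simpa using (Ne.symm hm3))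
      simpa using this
    have hγne : det2 (Q - P) (M - P) ≠ 0 := det2_ne_zero_of_not_collinear hPQM
    set D := det2 (Q - P) (R - P) with hDdef
    set β := det2 (M - P) (R - P) / D with hβdef
    set γ := det2 (Q - P) (M - P) / D with hγdef
    set α := 1 - β - γ with hαdef
    have hbar : M = α • P + β • Q + γ • R := bary hD
    have hsum : α + β + γ = 1 := by rw [hαdef]; ring
    -- edge (a-1, a)
    obtain ⟨f1, c1, h1a, h1b, h1lt⟩ := X.edgeOrder (a - 1)
    rw [sub_add_cancel] at h1b h1lt
    have h1Q : f1 Q < c1 := h1lt (a + 1) hne2.symm hne3.symm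
    have h1M : f1 M < c1 := h1lt m hm1 hm2
    have e1 : f1 M = α * f1 P + β * f1 Q + γ * f1 R := lin_comb f1 hbar
    have hβpos : 0 < β := by
      have hh : f1 M - c1 = β * (f1 Q - c1) := by
        rw [e1, h1a, h1b, hαdef]; ring
      nlinarith [hh, h1M, h1Q]
    -- edge (a, a+1)
    obtain ⟨f2, c2, h2a, h2b, h2lt⟩ := X.edgeOrder a
    have h2P : f2 P < c2 := h2lt (a - 1) hne1 hne2
    have h2M : f2 M < c2 := h2lt m hm2 hm3
    have e2 : f2 M = α * f2 P + β * f2 Q + γ * f2 R := lin_comb f2 hbar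
    have hαpos : 0 < α := by
      have hh : f2 M - c2 = α * (f2 P - c2) := by
        rw [e2, h2a, h2b, hαdef]; ring
      nlinarith [hh, h2M, h2P]
    -- conclude γ < 0
    rcases lt_trichotomy γ 0 with hγ | hγ | hγ
    · exact hγ
    · exact absurd ((div_eq_zero_iff.mp hγ).resolve_right hD) hγne
    · exfalso
      obtain ⟨fm, cm, hma, hmb, hmlt⟩ := X.edgeOrder m
      have em : fm M = α * fm P + β * fm Q + γ * fm R := lin_comb fm hbar
      have hvP : fm P ≤ cm := by
        by_cases hc : a - 1 = m + 1
        · rw [hPdef, hc, hmb]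
        · exact (hmlt (a - 1) (Ne.symm hm1) hc).le
      have hvQ : fm Q ≤ cm := by
        by_cases hc : a + 1 = m + 1
        · rw [hQdef, hc, hmb]
        · exact (hmlt (a + 1) (Ne.symm hm3) hc).le
      have hvR : fm R ≤ cm := by
        by_cases hc : a = m + 1
        · rw [hRdef, hc, hmb]
        · exact (hmlt a (Ne.symm hm2) hc).le
      have hMm : fm M = cm := by rw [hMdef, hma]
      have hcm : α * cm + β * cm + γ * cm = cm := by linear_combination cm * hsum
      by_cases hc2 : a = m + 1
      · have hPs : fm P < cm := by
          refine hmlt (a - 1) (Ne.symm hm1) ?_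
          rw [← hc2]; exact hne1
        linarith [mul_lt_mul_of_pos_left hPs hαpos, mul_le_mul_of_nonneg_left hvQ hβpos.le,
          mul_le_mul_of_nonneg_left hvR hγ.le, em, hMm, hcm]
      · have hRs : fm R < cm := hmlt a (Ne.symm hm2) hc2
        linarith [mul_le_mul_of_nonneg_left hvP hαpos.le, mul_le_mul_of_nonneg_left hvQ hβpos.le,
          mul_lt_mul_of_pos_left hRs hγ, em, hMm, hcm]
  -- construct the functional
  set D := det2 (Q - P) (R - P) with hDdef
  set ε : ℝ := if 0 < D then 1 else -1 with hε
  have hεD : 0 < ε * D := by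
    rcases hD.lt_or_gt with hlt | hgt
    · rw [hε, if_neg (not_lt.mpr hlt.le)]; nlinarith
    · rw [hε, if_pos hgt]; nlinarith
  refine ⟨ε • lfun (Q - P), ε * det2 (Q - P) P, ?_, ?_, ?_, ?_⟩
  · simp [lfun_apply, smul_eq_mul]
  · have h0 : det2 (Q - P) Q = det2 (Q - P) P := by
      have := det2_sub (Q - P) Q P
      rw [det2_self] at this
      linarith
    simp [lfun_apply, smul_eq_mul, h0]
  · have h0 : det2 (Q - P) R - det2 (Q - P) P = D := by
      rw [hDdef, det2_sub]
    have h2 : ε * det2 (Q - P) R - ε * det2 (Q - P) P = ε * D := by rw [← h0]; ring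
    simp only [LinearMap.smul_apply, lfun_apply, smul_eq_mul]
    linarith [h2, hεD]
  · intro m hm1 hm2 hm3
    have hq := key m hm1 hm2 hm3
    have hqD : det2 (Q - P) (X.black m - P) / D * D = det2 (Q - P) (X.black m - P) :=
      div_mul_cancel₀ _ hD
    have h0 : det2 (Q - P) (X.black m) - det2 (Q - P) P = det2 (Q - P) (X.black m - P) := by
      rw [det2_sub]
    have hneg : ε * det2 (Q - P) (X.black m - P) < 0 := by
      have h3 : ε * det2 (Q - P) (X.black m - P)
          = (det2 (Q - P) (X.black m - P) / D) * (ε * D) := by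
        linear_combination (-ε) * hqD
      rw [h3]
      exact mul_neg_of_neg_of_pos hq hεD
    have h2 : ε * det2 (Q - P) (X.black m) - ε * det2 (Q - P) P
        = ε * det2 (Q - P) (X.black m - P) := by rw [det2_sub]; ring
    simp only [LinearMap.smul_apply, lfun_apply, smul_eq_mul]
    linarith [hneg, h2]

lemma TDiagram.disjoint_aux {d : ℕ} (hd : 1 ≤ d) (X : TDiagram d) {x y : Fin (d + 3)}
    (h1 : y ≠ x - 1) (h2 : y ≠ x) (h3 : y ≠ x + 1) {w : Fin (d + 1)}
    (hx : X.white w ∈ X.bTri x) (hy : X.white w ∈ X.bTri y) : False := by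
  obtain ⟨f, c, hP, hQ, hR, hlt⟩ := X.diag hd x
  have hxne : x - 1 ≠ x + 1 := fun h => fin_two_ne d (by open Fin.CommRing in linear_combination -h)
  -- bTri x ⊆ {p | c ≤ f p}
  have hgex : c ≤ f (X.white w) := by
    have hsub : convexHull ℝ {X.black (x - 1), X.black x, X.black (x + 1)}
        ⊆ f ⁻¹' (Set.Ici c) := by
      apply convexHull_min ?_ ((convex_Ici c).linear_preimage f)
      intro p hp
      simp only [Set.mem_insert_iff, Set.mem_singleton_iff] at hp
      rcases hp with rfl | rfl | rfl
      · exact Set.mem_preimage.mpr (le_of_eq hP.symm)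
      · exact Set.mem_preimage.mpr (le_of_lt hR)
      · exact Set.mem_preimage.mpr (le_of_eq hQ.symm)
    exact hsub (interior_subset hx)
  -- bTri y ⊆ {p | f p ≤ c}
  have hley : f (X.white w) ≤ c := by
    have hvert : ∀ v : Fin (d + 3), v ≠ x → f (X.black v) ≤ c := by
      intro v hv
      by_cases e1 : v = x - 1
      · rw [e1, hP]
      by_cases e2 : v = x + 1
      · rw [e2, hQ]
      exact (hlt v e1 hv e2).le
    have hsub : convexHull ℝ {X.black (y - 1), X.black y, X.black (y + 1)}
        ⊆ f ⁻¹' (Set.Iic c) := by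
      apply convexHull_min ?_ ((convex_Iic c).linear_preimage f)
      intro p hp
      simp only [Set.mem_insert_iff, Set.mem_singleton_iff] at hp
      rcases hp with rfl | rfl | rfl
      · refine Set.mem_preimage.mpr (hvert _ fun h => h3 ?_)
        rw [← h]; rw [sub_add_cancel]
      · exact Set.mem_preimage.mpr (hvert _ h2)
      · refine Set.mem_preimage.mpr (hvert _ fun h => h1 ?_)
        rw [← h]; rw [add_sub_cancel_right]
    exact hsub (interior_subset hy)
  have hc : f (X.white w) = c := le_antisymm hley hgex
  have hcol : Collinear ℝ ({X.black (x - 1), X.black (x + 1), X.white w} : Set (ℝ × ℝ)) :=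
    collinear_of_level hP hQ hc hR.ne'
  have := X.genPos (.inl (x - 1)) (.inl (x + 1)) (.inr w)
    (by simpa using hxne) (by simp) (by simp)
  simp only [Sum.elim_inl, Sum.elim_inr] at this
  exact this hcol

lemma pick_pair {d : ℕ} (hd : 1 ≤ d) {i j k : Fin (d + 3)}
    (hij : i ≠ j) (hik : i ≠ k) (hjk : j ≠ k) :
    ∃ x y : Fin (d + 3), (x = i ∨ x = j ∨ x = k) ∧ (y = i ∨ y = j ∨ y = k) ∧
      y ≠ x - 1 ∧ y ≠ x ∧ y ≠ x + 1 := by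
  by_cases hj1 : j = i - 1
  · by_cases hk1 : k = i + 1
    · refine ⟨j, k, Or.inr (Or.inl rfl), Or.inr (Or.inr rfl), ?_, Ne.symm hjk, ?_⟩
      · rw [hj1, hk1]
        intro h
        exact fin_three_ne d hd (by open Fin.CommRing in linear_combination h)
      · rw [hj1, hk1, sub_add_cancel]
        intro h
        exact fin_one_ne d (by open Fin.CommRing in linear_combination h)
    · by_cases hk2 : k = i - 1
      · exact absurd (hk2.trans hj1.symm) hjk.symm
      · exact ⟨i, k, Or.inl rfl, Or.inr (Or.inr rfl), hk2, Ne.symm hik, hk1⟩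
  · by_cases hj2 : j = i + 1
    · by_cases hk1 : k = i - 1
      · refine ⟨k, j, Or.inr (Or.inr rfl), Or.inr (Or.inl rfl), ?_, hjk, ?_⟩
        · rw [hj2, hk1]
          intro h
          exact fin_three_ne d hd (by open Fin.CommRing in linear_combination h)
        · rw [hj2, hk1, sub_add_cancel]
          intro h
          exact fin_one_ne d (by open Fin.CommRing in linear_combination h)
      · by_cases hk2 : k = i + 1
        · exact absurd (hk2.trans hj2.symm) hjk.symm
        · exact ⟨i, k, Or.inl rfl, Or.inr (Or.inr rfl), hk1, Ne.symm hik, hk2⟩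
    · exact ⟨i, j, Or.inl rfl, Or.inr (Or.inl rfl), hj1, Ne.symm hij, hj2⟩

/-- In a t-diagram with `d ≥ 1`, every white point lies inside at most two
boundary triangles `A_{i-1} A_i A_{i+1}`. -/
theorem stmt4 (d : ℕ) (hd : 1 ≤ d) (X : TDiagram d) (w : Fin (d + 1)) :
    Nat.card {i : Fin (d + 3) // X.white w ∈ X.bTri i} ≤ 2 := by
  by_contra h
  push_neg at h
  classical
  haveI : Fintype {i : Fin (d + 3) // X.white w ∈ X.bTri i} := Fintype.ofFinite _
  rw [Nat.card_eq_fintype_card] at h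
  obtain ⟨⟨i, hi⟩, ⟨j, hj⟩, ⟨k, hk⟩, hij, hik, hjk⟩ := Fintype.two_lt_card_iff.mp h
  have hij' : i ≠ j := fun h' => hij (Subtype.ext h')
  have hik' : i ≠ k := fun h' => hik (Subtype.ext h')
  have hjk' : j ≠ k := fun h' => hjk (Subtype.ext h')
  obtain ⟨x, y, hx, hy, hy1, hy2, hy3⟩ := pick_pair hd hij' hik' hjk'
  have hwx : X.white w ∈ X.bTri x := by rcases hx with rfl | rfl | rfl <;> assumption
  have hwy : X.white w ∈ X.bTri y := by rcases hy with rfl | rfl | rfl <;> assumption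
  exact X.disjoint_aux hd hy1 hy2 hy3 hwx hwy
end

section
/- In a t-diagram with d ≥ 1, there exist at least two white points each of which lies inside two consecutive boundary triangles (i.e., corresponds to two adjacent black vertices); for d = 0 there is exactly one such white point. -/
/-! ### Auxiliary lemmas -/

lemma fin_one_ne_zero' {n : ℕ} [NeZero n] (hn : 2 ≤ n) : (1 : Fin n) ≠ 0 := by
  intro h
  have h2 := congrArg Fin.val h
  rw [Fin.val_one', Fin.val_zero, Nat.mod_eq_of_lt (by omega)] at h2
  exact one_ne_zero h2

lemma fin_two_ne_zero' {n : ℕ} [NeZero n] (hn : 3 ≤ n) : (1 + 1 : Fin n) ≠ 0 := by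
  intro h
  have h2 := congrArg Fin.val h
  simp only [Fin.val_add, Fin.val_one', Fin.val_zero] at h2
  rw [Nat.mod_eq_of_lt (show 1 < n by omega),
    Nat.mod_eq_of_lt (show 1+1 < n by omega)] at h2
  omega

lemma fin_three_ne_zero' {n : ℕ} [NeZero n] (hn : 4 ≤ n) : (1 + 1 + 1 : Fin n) ≠ 0 := by
  intro h
  have h2 := congrArg Fin.val h
  simp only [Fin.val_add, Fin.val_one', Fin.val_zero] at h2
  rw [Nat.mod_eq_of_lt (show 1 < n by omega),
    Nat.mod_eq_of_lt (show 1+1 < n by omega),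
    Nat.mod_eq_of_lt (show 1+1+1 < n by omega)] at h2
  omega

lemma fin_sub_one_ne {d : ℕ} (i : Fin (d + 3)) : i - 1 ≠ i := fun h =>
  fin_one_ne_zero' (n := d + 3) (by omega) (sub_eq_self.mp h)

lemma fin_ne_add_one {d : ℕ} (i : Fin (d + 3)) : i ≠ i + 1 := fun h =>
  fin_one_ne_zero' (n := d + 3) (by omega) (left_eq_add.mp h)

lemma fin_sub_one_ne_add_one {d : ℕ} (i : Fin (d + 3)) : i - 1 ≠ i + 1 := by
  intro h
  refine fin_two_ne_zero' (n := d + 3) (by omega) ?_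
  have h0 : i + 1 - (i - 1) = 0 := by rw [← h]; simp
  rw [← h0]; abel

/-- An affine basis of the plane made of three non-collinear points. -/
noncomputable def triBasis (p q r : ℝ × ℝ) (h : ¬ Collinear ℝ ({p, q, r} : Set (ℝ × ℝ))) :
    AffineBasis (Fin 3) ℝ (ℝ × ℝ) :=
  ⟨![p, q, r], affineIndependent_iff_not_collinear_set.2 h, by
    rw [(affineIndependent_iff_not_collinear_set.2 h).affineSpan_eq_top_iff_card_eq_finrank_add_one]
    simp⟩

lemma triBasis_range (p q r : ℝ × ℝ) (h : ¬ Collinear ℝ ({p, q, r} : Set (ℝ × ℝ))) :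
    Set.range (triBasis p q r h) = {p, q, r} := by
  show Set.range ![p,q,r] = _
  simp only [Matrix.range_cons, Matrix.range_empty, Set.union_empty, Set.union_singleton]
  ext y; simp; tauto

lemma affine_eval (b : AffineBasis (Fin 3) ℝ (ℝ × ℝ)) (g : (ℝ × ℝ) →ᵃ[ℝ] ℝ) (x : ℝ × ℝ) :
    g x = b.coord 0 x * g (b 0) + b.coord 1 x * g (b 1) + b.coord 2 x * g (b 2) := by
  have h2 := Finset.univ.map_affineCombination b (fun i => b.coord i x)
    (b.sum_coord_apply_eq_one x) g
  rw [b.affineCombination_coord_eq_self x] at h2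
  rw [h2, Finset.univ.affineCombination_eq_linear_combination _ _ (b.sum_coord_apply_eq_one x),
    Fin.sum_univ_three]
  simp [smul_eq_mul]

lemma interior_neg (L : (ℝ × ℝ) →ᵃ[ℝ] ℝ) (v : ℝ × ℝ) (hv : L.linear v = 1)
    (s : Set (ℝ × ℝ)) (hs : ∀ y ∈ s, L y ≤ 0) {x : ℝ × ℝ} (hx : x ∈ interior s) : L x < 0 := by
  obtain ⟨ε, hε, hball⟩ := Metric.mem_nhds_iff.1 (mem_interior_iff_mem_nhds.1 hx)
  set t := ε / (2 * (‖v‖ + 1)) with ht_def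
  have hnv : (0:ℝ) < ‖v‖ + 1 := by positivity
  have ht : 0 < t := by positivity
  have hy : (t • v) +ᵥ x ∈ Metric.ball x ε := by
    simp only [vadd_eq_add, Metric.mem_ball, dist_eq_norm, add_sub_cancel_right, norm_smul,
      Real.norm_eq_abs, abs_of_pos ht]
    calc t * ‖v‖ ≤ t * (‖v‖ + 1) := by nlinarith
    _ = ε / 2 := by rw [ht_def]; field_simp
    _ < ε := by linarith
  have h1 := hs _ (hball hy)
  rw [AffineMap.map_vadd, map_smul, hv] at h1
  simp only [smul_eq_mul, mul_one, vadd_eq_add] at h1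
  linarith

lemma TDiagram.blackNotCol {d : ℕ} (X : TDiagram d) {a b c : Fin (d+3)}
    (h1 : a ≠ b) (h2 : a ≠ c) (h3 : b ≠ c) :
    ¬ Collinear ℝ ({X.black a, X.black b, X.black c} : Set (ℝ × ℝ)) := by
  have := X.genPos (Sum.inl a) (Sum.inl b) (Sum.inl c)
    (by simp [h1]) (by simp [h2]) (by simp [h3])
  simpa using this

/-- Key geometric fact: with respect to the affine basis `A_{i-1}, A_i, A_{i+1}`,
every other black point has negative middle barycentric coordinate. -/
lemma TDiagram.coord_neg {d : ℕ} (X : TDiagram d) (i : Fin (d + 3))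
    (b : AffineBasis (Fin 3) ℝ (ℝ × ℝ))
    (hb0 : b 0 = X.black (i - 1)) (hb1 : b 1 = X.black i) (hb2 : b 2 = X.black (i + 1))
    (m : Fin (d + 3)) (hm1 : m ≠ i - 1) (hm2 : m ≠ i) (hm3 : m ≠ i + 1) :
    b.coord 1 (X.black m) < 0 := by
  have e0 : i - 1 + 1 = i := by abel
  have f1 : i - 1 ≠ i := fin_sub_one_ne i
  have f2 : i ≠ i + 1 := fin_ne_add_one i
  have f3 : i - 1 ≠ i + 1 := fin_sub_one_ne_add_one i
  set α := b.coord 0 (X.black m) with hα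
  set β := b.coord 1 (X.black m) with hβ
  set γ := b.coord 2 (X.black m) with hγ
  have hsum : α + β + γ = 1 := by
    have := b.sum_coord_apply_eq_one (X.black m)
    rwa [Fin.sum_univ_three] at this
  -- edge (i-1, i): gives γ > 0
  have hγpos : 0 < γ := by
    obtain ⟨g, cg, hg1, hg2, hg3⟩ := X.edgeOrder (i - 1)
    rw [e0] at hg2 hg3
    have hgr : g (X.black (i+1)) < cg := hg3 _ (Ne.symm f3) (Ne.symm f2)
    have hgm : g (X.black m) < cg := hg3 _ hm1 hm2
    have hg := affine_eval b g.toAffineMap (X.black m)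
    rw [hb0, hb1, hb2] at hg
    simp only [LinearMap.coe_toAffineMap] at hg
    rw [hg1, hg2] at hg
    by_contra hc
    push_neg at hc
    have hp : 0 ≤ (-γ) * (cg - g (X.black (i+1))) :=
      mul_nonneg (by linarith) (by linarith)
    have hcg : α * cg + β * cg + γ * cg = cg := by linear_combination cg * hsum
    nlinarith [hg]
  -- edge (i, i+1): gives α > 0
  have hαpos : 0 < α := by
    obtain ⟨g, cg, hg1, hg2, hg3⟩ := X.edgeOrder i
    have hgp : g (X.black (i-1)) < cg := hg3 _ f1 f3
    have hgm : g (X.black m) < cg := hg3 _ hm2 hm3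
    have hg := affine_eval b g.toAffineMap (X.black m)
    rw [hb0, hb1, hb2] at hg
    simp only [LinearMap.coe_toAffineMap] at hg
    rw [hg1, hg2] at hg
    by_contra hc
    push_neg at hc
    have hp : 0 ≤ (-α) * (cg - g (X.black (i-1))) :=
      mul_nonneg (by linarith) (by linarith)
    have hcg : α * cg + β * cg + γ * cg = cg := by linear_combination cg * hsum
    nlinarith [hg]
  -- edge (m, m+1): gives β < 0
  obtain ⟨f, cf, hf1, hf2, hf3⟩ := X.edgeOrder m
  have hfq : f (X.black i) < cf := by
    refine hf3 _ (Ne.symm hm2) ?_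
    intro h
    exact hm1 (eq_sub_of_add_eq h.symm)
  have hfr : f (X.black (i+1)) < cf := by
    refine hf3 _ (Ne.symm hm3) ?_
    intro h
    exact hm2 (add_right_cancel (a := i) (b := (1 : Fin (d+3))) h).symm
  have hfp : f (X.black (i-1)) ≤ cf := by
    by_cases hpm : i - 1 = m + 1
    · rw [hpm, hf2]
    · exact (hf3 _ (Ne.symm hm1) hpm).le
  have hg := affine_eval b f.toAffineMap (X.black m)
  rw [hb0, hb1, hb2] at hg
  simp only [LinearMap.coe_toAffineMap] at hg
  rw [hf1] at hg
  by_contra hc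
  push_neg at hc
  have p1 : 0 ≤ α * (cf - f (X.black (i-1))) := mul_nonneg hαpos.le (by linarith)
  have p2 : 0 ≤ β * (cf - f (X.black i)) := mul_nonneg hc (by linarith)
  have p3 : 0 < γ * (cf - f (X.black (i+1))) := mul_pos hγpos (by linarith)
  have hcf : α * cf + β * cf + γ * cf = cf := by linear_combination cf * hsum
  nlinarith [hg]

/-- Boundary triangles of non-adjacent black vertices are disjoint. -/
lemma TDiagram.bTri_disj {d : ℕ} (X : TDiagram d) (i j : Fin (d + 3))
    (h1 : j ≠ i - 1) (h2 : j ≠ i) (h3 : j ≠ i + 1) {x : ℝ × ℝ}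
    (hxi : x ∈ X.bTri i) (hxj : x ∈ X.bTri j) : False := by
  have f1 : i - 1 ≠ i := fin_sub_one_ne i
  have f2 : i ≠ i + 1 := fin_ne_add_one i
  have f3 : i - 1 ≠ i + 1 := fin_sub_one_ne_add_one i
  have hnc : ¬ Collinear ℝ ({X.black (i-1), X.black i, X.black (i+1)} : Set (ℝ × ℝ)) :=
    X.blackNotCol f1 f3 f2
  set b := triBasis _ _ _ hnc with hbdef
  have hb0 : b 0 = X.black (i-1) := rfl
  have hb1 : b 1 = X.black i := rfl
  have hb2 : b 2 = X.black (i+1) := rfl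
  have hr := triBasis_range _ _ _ hnc
  -- From membership in bTri i: positive middle coordinate
  rw [TDiagram.bTri, ← hr, ← hbdef, b.interior_convexHull] at hxi
  have hpos : 0 < b.coord 1 x := hxi 1
  -- From membership in bTri j: nonpositive middle coordinate
  have key : ∀ e : Fin (d+3), e ≠ i → b.coord 1 (X.black e) ≤ 0 := by
    intro e he
    by_cases e1 : e = i - 1
    · rw [e1, ← hb0, b.coord_apply]; simp
    by_cases e2 : e = i + 1
    · rw [e2, ← hb2, b.coord_apply]; simp
    · exact (X.coord_neg i b hb0 hb1 hb2 e e1 he e2).le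
  have hsub : convexHull ℝ ({X.black (j-1), X.black j, X.black (j+1)} : Set (ℝ × ℝ)) ⊆
      {y | b.coord 1 y ≤ 0} := by
    apply convexHull_min ?_ ((convex_Iic (0:ℝ)).affine_preimage (b.coord 1))
    intro y hy
    rcases hy with rfl | rfl | rfl
    · refine key _ (fun h => h3 ?_)
      rw [← h]; abel
    · exact key _ h2
    · refine key _ (fun h => h1 ?_)
      rw [← h]; abel
  have hv : (b.coord 1).linear (b 1 - b 0) = 1 := by
    have := AffineMap.linearMap_vsub (b.coord 1) (b 1) (b 0)
    rw [vsub_eq_sub] at this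
    rw [this, b.coord_apply, b.coord_apply]
    simp
  have hneg := interior_neg (b.coord 1) (b 1 - b 0) hv _ (fun y hy => hsub hy) hxj
  linarith

/-- Lemma 3.7(1): in a t-diagram with `d ≥ 1` there are at least two white points
adjacent to sides (lying in the boundary triangles of two adjacent black vertices),
and for `d = 0` there is exactly one such white point. -/
theorem stmt5 (d : ℕ) (X : TDiagram d) :
    (1 ≤ d → 2 ≤ Nat.card {w : Fin (d + 1) //
        ∃ i : Fin (d + 3), X.white w ∈ X.bTri i ∧ X.white w ∈ X.bTri (i + 1)}) ∧
    (d = 0 → Nat.card {w : Fin (d + 1) //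
        ∃ i : Fin (d + 3), X.white w ∈ X.bTri i ∧ X.white w ∈ X.bTri (i + 1)} = 1) := by
  classical
  constructor
  · -- at least two for d ≥ 1
    intro hd
    -- the unique white point of each boundary triangle
    have hEx : ∀ i : Fin (d+3), ∃ w : Fin (d+1), X.white w ∈ X.bTri i ∧
        ∀ y : Fin (d+1), X.white y ∈ X.bTri i → y = w := by
      intro i
      obtain ⟨w, hw, hu⟩ := X.onePerTriangle (i-1) i (i+1) (fin_sub_one_ne i)
        (fin_sub_one_ne_add_one i) (fin_ne_add_one i)
      exact ⟨w, hw, hu⟩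
    choose F hFmem hFu using hEx
    have hnbr : ∀ i j : Fin (d+3), F i = F j → j = i - 1 ∨ j = i ∨ j = i + 1 := by
      intro i j hij
      by_contra hc
      push_neg at hc
      have hj := hFmem j
      rw [← hij] at hj
      exact X.bTri_disj i j hc.1 hc.2.1 hc.2.2 (hFmem i) hj
    -- fibers of F have size at most 2
    set fc : Fin (d+1) → ℕ := fun w => (Finset.univ.filter fun i => F i = w).card with hfc
    have hfc2 : ∀ w, fc w ≤ 2 := by
      intro w
      rcases (Finset.univ.filter fun i => F i = w).eq_empty_or_nonempty with he | ⟨i, hi⟩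
      · simp only [hfc, he, Finset.card_empty]; omega
      · simp only [Finset.mem_filter] at hi
        have hiw : F i = w := hi.2
        by_cases hip : F (i+1) = w
        · have hsub : (Finset.univ.filter fun k => F k = w) ⊆ {i, i+1} := by
            intro k hk
            simp only [Finset.mem_filter] at hk
            rcases hnbr i k (hiw.trans hk.2.symm) with h | h | h
            · exfalso
              have h2 : F (i+1) = F (i-1) := by rw [hip, ← h, hk.2]
              rcases hnbr (i+1) (i-1) h2 with h' | h' | h'
              · have : i - 1 = i := by rw [h']; abel
                exact fin_sub_one_ne i this
              · exact fin_sub_one_ne_add_one i h'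
              · refine fin_three_ne_zero' (n := d + 3) (by omega) ?_
                have h0 : i + 1 + 1 - (i - 1) = 0 := by rw [← h']; simp
                rw [← h0]; abel
            · simp [h]
            · simp [h]
          calc fc w ≤ ({i, i+1} : Finset (Fin (d+3))).card := Finset.card_le_card hsub
            _ ≤ 2 := by
                refine le_trans (Finset.card_insert_le _ _) ?_
                simp
        · have hsub : (Finset.univ.filter fun k => F k = w) ⊆ {i-1, i} := by
            intro k hk
            simp only [Finset.mem_filter] at hk
            rcases hnbr i k (hiw.trans hk.2.symm) with h | h | h
            · simp [h]
            · simp [h]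
            · exact absurd (h ▸ hk.2) hip
          calc fc w ≤ ({i-1, i} : Finset (Fin (d+3))).card := Finset.card_le_card hsub
            _ ≤ 2 := by
                refine le_trans (Finset.card_insert_le _ _) ?_
                simp
    have hsum : ∑ w, fc w = d + 3 := by
      have := Finset.card_eq_sum_card_fiberwise
        (f := F) (s := Finset.univ) (t := Finset.univ) (fun x _ => Finset.mem_univ _)
      simpa using this.symm
    -- at least two whites have fiber of size ≥ 2
    set S' : Finset (Fin (d+1)) := Finset.univ.filter fun w => 2 ≤ fc w with hS'def
    have hS' : 2 ≤ S'.card := by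
      by_contra hcon
      push_neg at hcon
      have hsplit := Finset.sum_filter_add_sum_filter_not Finset.univ (fun w => 2 ≤ fc w) fc
      have b1 : ∑ w ∈ S', fc w ≤ 2 * S'.card := by
        calc ∑ w ∈ S', fc w ≤ ∑ _w ∈ S', 2 := Finset.sum_le_sum (fun w _ => hfc2 w)
          _ = 2 * S'.card := by rw [Finset.sum_const, smul_eq_mul, mul_comm]
      have b2 : ∑ w ∈ (Finset.univ.filter fun w => ¬ 2 ≤ fc w), fc w ≤
          (Finset.univ.filter fun w => ¬ 2 ≤ fc w).card * 1 := by
        refine Finset.sum_le_card_nsmul _ _ 1 ?_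
        intro w hw
        simp only [Finset.mem_filter] at hw
        omega
      have hc1 : (Finset.univ.filter fun w => ¬ 2 ≤ fc w).card ≤ d + 1 := by
        refine le_trans (Finset.card_filter_le _ _) ?_
        simp
      rw [← hS'def] at hsplit
      rw [hsum] at hsplit
      have hcard : S'.card + (Finset.univ.filter fun w => ¬ 2 ≤ fc w).card = d + 1 := by
        rw [hS'def, Finset.card_filter_add_card_filter_not]
        simp
      omega
    obtain ⟨w1, hw1, w2, hw2, hww⟩ := Finset.one_lt_card.1 (by omega : 1 < S'.card)
    have hP : ∀ w ∈ S', ∃ i : Fin (d+3), X.white w ∈ X.bTri i ∧ X.white w ∈ X.bTri (i+1) := by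
      intro w hw
      simp only [hS'def, Finset.mem_filter] at hw
      obtain ⟨i, hi, j, hj, hij⟩ := Finset.one_lt_card.1 (by omega : 1 < fc w)
      simp only [Finset.mem_filter] at hi hj
      have hmem : ∀ k : Fin (d+3), F k = w → X.white w ∈ X.bTri k := by
        intro k hk; rw [← hk]; exact hFmem k
      rcases hnbr i j (hi.2.trans hj.2.symm) with h | h | h
      · refine ⟨j, hmem j hj.2, ?_⟩
        have : j + 1 = i := by rw [h]; abel
        rw [this]; exact hmem i hi.2
      · exact absurd h.symm hij
      · exact ⟨i, hmem i hi.2, h ▸ hmem j hj.2⟩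
    have hnt : Nontrivial {w : Fin (d + 1) //
        ∃ i : Fin (d + 3), X.white w ∈ X.bTri i ∧ X.white w ∈ X.bTri (i + 1)} := by
      refine ⟨⟨⟨w1, hP w1 hw1⟩, ⟨w2, hP w2 hw2⟩, ?_⟩⟩
      simp [hww]
    have := Finite.one_lt_card_iff_nontrivial.2 hnt
    omega
  · -- exactly one for d = 0
    intro hd0
    subst hd0
    obtain ⟨w, hw, -⟩ := X.onePerTriangle 0 1 2 (by decide) (by decide) (by decide)
    have hw0 : w = 0 := Fin.ext (by omega)
    subst hw0
    have hset : ∀ i : Fin 3, ({X.black (i - 1), X.black i, X.black (i+1)} : Set (ℝ × ℝ)) =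
        {X.black 0, X.black 1, X.black 2} := by
      intro i
      fin_cases i <;>
      · simp only [show ((0:Fin 3) - 1) = 2 from by decide, show ((1:Fin 3) - 1) = 0 from by decide,
          show ((2:Fin 3) - 1) = 1 from by decide, show ((0:Fin 3) + 1) = 1 from by decide,
          show ((1:Fin 3) + 1) = 2 from by decide, show ((2:Fin 3) + 1) = 0 from by decide]
        ext y; simp only [Set.mem_insert_iff, Set.mem_singleton_iff]; tauto
    have hmem : ∀ i : Fin 3, X.white 0 ∈ X.bTri i := by
      intro i
      rw [TDiagram.bTri, hset i]
      exact hw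
    have hP0 : ∃ i : Fin 3, X.white 0 ∈ X.bTri i ∧ X.white 0 ∈ X.bTri (i + 1) :=
      ⟨0, hmem 0, hmem 1⟩
    haveI : Nonempty {w : Fin 1 //
        ∃ i : Fin 3, X.white w ∈ X.bTri i ∧ X.white w ∈ X.bTri (i + 1)} := ⟨⟨0, hP0⟩⟩
    haveI : Subsingleton {w : Fin 1 //
        ∃ i : Fin 3, X.white w ∈ X.bTri i ∧ X.white w ∈ X.bTri (i + 1)} :=
      ⟨fun a b => Subtype.ext (Fin.ext (by omega))⟩
    exact Nat.card_unique
end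

section
/- In a t-diagram, a white point B lies inside both boundary triangles of adjacent vertices A_i and A_{i+1} if and only if B lies inside every triangle of the form A_iA_{i+1}A_j (j ≠ i, i+1) and inside no other triangle with black vertices. -/
noncomputable section

open scoped Fin.CommRing Fin.NatCast

/-- Twice the signed area of triangle `a b c`. -/
def Dd (a b c : ℝ × ℝ) : ℝ := (b.1 - a.1) * (c.2 - a.2) - (b.2 - a.2) * (c.1 - a.1)

lemma Dd_cyc (a b c : ℝ × ℝ) : Dd a b c = Dd b c a := by unfold Dd; ring

lemma Dd_swap (a b c : ℝ × ℝ) : Dd a b c = -Dd a c b := by unfold Dd; ring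

lemma Dd_self₁ (a b : ℝ × ℝ) : Dd a b a = 0 := by unfold Dd; ring

lemma Dd_self₂ (a b : ℝ × ℝ) : Dd a b b = 0 := by unfold Dd; ring

/-- four point identity -/
lemma Dd_four (a b c d : ℝ × ℝ) : Dd a b c = Dd d b c + Dd a d c + Dd a b d := by
  unfold Dd; ring

/-- The key Cramer-type identity. -/
lemma Dd_key (P1 P2 P3 z x y : ℝ × ℝ) :
    Dd P1 P2 P3 * Dd x y z =
      Dd z P2 P3 * Dd x y P1 + Dd P1 z P3 * Dd x y P2 + Dd P1 P2 z * Dd x y P3 := by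
  unfold Dd; ring

lemma vec_cramer₁ (a b c y : ℝ × ℝ) :
    Dd a b c * y.1 = Dd y b c * a.1 + Dd a y c * b.1 + Dd a b y * c.1 := by
  unfold Dd; ring

lemma vec_cramer₂ (a b c y : ℝ × ℝ) :
    Dd a b c * y.2 = Dd y b c * a.2 + Dd a y c * b.2 + Dd a b y * c.2 := by
  unfold Dd; ring

lemma collinear_of_Dd {a b c : ℝ × ℝ} (h : Dd a b c = 0) :
    Collinear ℝ ({a, b, c} : Set (ℝ × ℝ)) := by
  by_cases hba : b = a
  · subst hba
    have : ({b, b, c} : Set (ℝ × ℝ)) = {b, c} := by simp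
    rw [this]
    exact collinear_pair ℝ b c
  · apply (collinear_iff_of_mem (show a ∈ ({a, b, c} : Set (ℝ × ℝ)) by simp)).2
    refine ⟨b - a, ?_⟩
    have key : ∀ p : ℝ × ℝ, Dd a b p = 0 → ∃ t : ℝ, p = t • (b - a) +ᵥ a := by
      intro p hp
      by_cases h1 : b.1 - a.1 = 0
      · have h2' : b.2 - a.2 ≠ 0 := by
          intro h2
          exact hba (Prod.ext (by linarith) (by linarith))
        refine ⟨(p.2 - a.2) / (b.2 - a.2), ?_⟩
        have e1 : p.1 - a.1 = 0 := by
          rcases mul_eq_zero.1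
            (show (b.2 - a.2) * (p.1 - a.1) = 0 by
              unfold Dd at hp; linear_combination -hp + (p.2 - a.2) * h1) with h' | h'
          · exact absurd h' h2'
          · exact h'
        simp only [vadd_eq_add, Prod.ext_iff, Prod.fst_add, Prod.snd_add, Prod.smul_fst,
          Prod.smul_snd, Prod.fst_sub, Prod.snd_sub, smul_eq_mul]
        constructor
        · rw [h1]; simp; linarith
        · field_simp
          ring
      · refine ⟨(p.1 - a.1) / (b.1 - a.1), ?_⟩
        simp only [vadd_eq_add, Prod.ext_iff, Prod.fst_add, Prod.snd_add, Prod.smul_fst,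
          Prod.smul_snd, Prod.fst_sub, Prod.snd_sub, smul_eq_mul]
        unfold Dd at hp
        constructor
        · field_simp
          ring
        · field_simp
          linear_combination hp
    rintro p (rfl | rfl | rfl)
    · exact ⟨0, by simp⟩
    · exact ⟨1, by simp⟩
    · exact key p h

lemma Dd_ne_of_not_collinear {a b c : ℝ × ℝ} (h : ¬ Collinear ℝ ({a, b, c} : Set (ℝ × ℝ))) :
    Dd a b c ≠ 0 := fun h0 => h (collinear_of_Dd h0)

lemma mem_hull_tri {a b c x : ℝ × ℝ} :
    x ∈ convexHull ℝ ({a, b, c} : Set (ℝ × ℝ)) ↔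
      ∃ α β γ : ℝ, 0 ≤ α ∧ 0 ≤ β ∧ 0 ≤ γ ∧ α + β + γ = 1 ∧ x = α • a + β • b + γ • c := by
  rw [show ({a, b, c} : Set (ℝ × ℝ)) = insert a {b, c} from rfl,
    convexHull_insert ⟨b, by simp⟩, convexHull_pair]
  simp only [mem_convexJoin, Set.mem_singleton_iff, exists_eq_left]
  constructor
  · rintro ⟨z, ⟨u, v, hu, hv, huv, hz⟩, ⟨θ, τ, hθ, hτ, hθτ, hx⟩⟩
    refine ⟨θ, τ * u, τ * v, hθ, mul_nonneg hτ hu, mul_nonneg hτ hv, ?_, ?_⟩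
    · linear_combination τ * huv + hθτ
    · rw [← hx, ← hz, smul_add, smul_smul, smul_smul, add_assoc]
  · rintro ⟨α, β, γ, hα, hβ, hγ, hsum, hx⟩
    by_cases hβγ : β + γ = 0
    · have hβ0 : β = 0 := by linarith
      have hγ0 : γ = 0 := by linarith
      have hα1 : α = 1 := by linarith
      refine ⟨b, left_mem_segment ℝ b c, ?_⟩
      rw [hx, hβ0, hγ0, hα1]
      simp only [one_smul, zero_smul, add_zero]
      exact left_mem_segment ℝ a b
    · have hpos : 0 < β + γ := lt_of_le_of_ne (by linarith) (Ne.symm hβγ)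
      refine ⟨(β / (β + γ)) • b + (γ / (β + γ)) • c,
        ⟨β / (β + γ), γ / (β + γ), div_nonneg hβ hpos.le, div_nonneg hγ hpos.le, by
          field_simp, rfl⟩,
        ⟨α, β + γ, hα, hpos.le, by linarith, ?_⟩⟩
      have e1 : (β + γ) * (β / (β + γ)) = β := by field_simp
      have e2 : (β + γ) * (γ / (β + γ)) = γ := by field_simp
      rw [hx, smul_add, smul_smul, smul_smul, e1, e2, add_assoc]

lemma Dd_combo (u v a b c : ℝ × ℝ) (α β γ : ℝ) (h : α + β + γ = 1) :
    Dd u v (α • a + β • b + γ • c) = α * Dd u v a + β * Dd u v b + γ * Dd u v c := by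
  have hγ : γ = 1 - α - β := by linarith
  subst hγ
  unfold Dd
  simp only [Prod.fst_add, Prod.snd_add, Prod.smul_fst, Prod.smul_snd, smul_eq_mul]
  ring

lemma div_pos_of_mul_pos {x y : ℝ} (h : 0 < x * y) : 0 < x / y := by
  rcases mul_pos_iff.1 h with ⟨h1, h2⟩ | ⟨h1, h2⟩
  · exact div_pos h1 h2
  · exact div_pos_of_neg_of_neg h1 h2

lemma coord_nonneg {a b c x : ℝ × ℝ} (hx : x ∈ convexHull ℝ ({a, b, c} : Set (ℝ × ℝ))) :
    0 ≤ Dd x b c * Dd a b c := by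
  obtain ⟨α, β, γ, hα, hβ, hγ, hsum, rfl⟩ := mem_hull_tri.1 hx
  have e : Dd (α • a + β • b + γ • c) b c = α * Dd a b c := by
    rw [Dd_cyc, Dd_combo _ _ _ _ _ _ _ _ hsum, Dd_self₁, Dd_self₂, ← Dd_cyc]
    ring
  rw [e]
  nlinarith [sq_nonneg (Dd a b c)]

lemma coord_pos {a b c x : ℝ × ℝ} (h : ¬ Collinear ℝ ({a, b, c} : Set (ℝ × ℝ)))
    (hx : x ∈ interior (convexHull ℝ ({a, b, c} : Set (ℝ × ℝ)))) :
    0 < Dd x b c * Dd a b c := by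
  have hΔ := Dd_ne_of_not_collinear h
  have h0 : 0 ≤ Dd x b c * Dd a b c := coord_nonneg (interior_subset hx)
  rcases h0.lt_or_eq with hlt | heq
  · exact hlt
  · exfalso
    have hx0 : Dd x b c = 0 := by
      rcases mul_eq_zero.1 heq.symm with h' | h'
      · exact h'
      · exact absurd h' hΔ
    have hxa : x ≠ a := by
      rintro rfl
      exact hΔ hx0
    have hna : 0 < ‖x - a‖ := by
      rw [norm_pos_iff]
      exact sub_ne_zero.mpr hxa
    obtain ⟨ε, hε, hball⟩ := Metric.isOpen_iff.1 isOpen_interior x hx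
    set t : ℝ := ε / (2 * ‖x - a‖) with hts
    have ht : 0 < t := div_pos hε (by positivity)
    set y : ℝ × ℝ := x + t • (x - a) with hys
    have hy : y ∈ Metric.ball x ε := by
      rw [Metric.mem_ball, dist_eq_norm]
      have : y - x = t • (x - a) := by rw [hys]; abel
      rw [this, norm_smul, Real.norm_eq_abs, abs_of_pos ht, hts]
      rw [div_mul_eq_mul_div, mul_comm]
      rw [div_lt_iff₀ (by positivity)]
      nlinarith
    have hyh : y ∈ convexHull ℝ ({a, b, c} : Set (ℝ × ℝ)) := interior_subset (hball hy)
    have hyc : y = (1 + t) • x + (-t) • a + (0 : ℝ) • c := by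
      rw [hys]; module
    have e : Dd y b c = -t * Dd a b c := by
      rw [Dd_cyc, hyc, Dd_combo _ _ _ _ _ _ _ _ (by ring : (1+t) + (-t) + (0:ℝ) = 1)]
      have e1 : Dd b c x = 0 := by rw [← Dd_cyc]; exact hx0
      have e2 : Dd b c a = Dd a b c := (Dd_cyc a b c).symm
      rw [e1, e2]; ring
    have := coord_nonneg hyh
    rw [e] at this
    nlinarith [sq_nonneg (Dd a b c), mul_self_pos.2 hΔ]

lemma tri_rot {a b c : ℝ × ℝ} : ({b, c, a} : Set (ℝ × ℝ)) = {a, b, c} := by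
  ext y; simp only [Set.mem_insert_iff, Set.mem_singleton_iff]; tauto

lemma mem_int_tri {a b c x : ℝ × ℝ} (h : ¬ Collinear ℝ ({a, b, c} : Set (ℝ × ℝ))) :
    x ∈ interior (convexHull ℝ ({a, b, c} : Set (ℝ × ℝ))) ↔
      0 < Dd x b c * Dd a b c ∧ 0 < Dd a x c * Dd a b c ∧ 0 < Dd a b x * Dd a b c := by
  have hΔ := Dd_ne_of_not_collinear h
  have hrot : ¬ Collinear ℝ ({b, c, a} : Set (ℝ × ℝ)) := by rwa [tri_rot]
  have hrot2 : ¬ Collinear ℝ ({c, a, b} : Set (ℝ × ℝ)) := by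
    rw [show ({c, a, b} : Set (ℝ × ℝ)) = {b, c, a} from tri_rot]; exact hrot
  constructor
  · intro hx
    refine ⟨coord_pos h hx, ?_, ?_⟩
    · have := coord_pos hrot (by rwa [tri_rot])
      rwa [show Dd x c a = Dd a x c by rw [Dd_cyc, Dd_cyc], show Dd b c a = Dd a b c by rw [← Dd_cyc]]
        at this
    · have := coord_pos hrot2 (by rwa [show ({c, a, b} : Set (ℝ × ℝ)) = {b, c, a} from tri_rot,
        tri_rot])
      rwa [show Dd x a b = Dd a b x by rw [Dd_cyc, Dd_cyc], show Dd c a b = Dd a b c by rw [Dd_cyc]]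
        at this
  · rintro ⟨h1, h2, h3⟩
    set U : Set (ℝ × ℝ) := {y | 0 < Dd y b c * Dd a b c} ∩
      ({y | 0 < Dd a y c * Dd a b c} ∩ {y | 0 < Dd a b y * Dd a b c}) with hU
    have hUopen : IsOpen U := by
      refine IsOpen.inter ?_ (IsOpen.inter ?_ ?_) <;>
      · apply isOpen_lt continuous_const
        unfold Dd
        fun_prop
    have hUsub : U ⊆ convexHull ℝ ({a, b, c} : Set (ℝ × ℝ)) := by
      rintro y ⟨hy1, hy2, hy3⟩
      rw [mem_hull_tri]
      refine ⟨Dd y b c / Dd a b c, Dd a y c / Dd a b c, Dd a b y / Dd a b c,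
        (div_pos_of_mul_pos hy1).le, (div_pos_of_mul_pos hy2).le, (div_pos_of_mul_pos hy3).le,
        ?_, ?_⟩
      · field_simp
        linear_combination (Dd_four a b c y).symm
      · apply Prod.ext <;>
          simp only [Prod.fst_add, Prod.snd_add, Prod.smul_fst, Prod.smul_snd, smul_eq_mul]
        · field_simp
          linear_combination vec_cramer₁ a b c y
        · field_simp
          linear_combination vec_cramer₂ a b c y
    exact interior_maximal hUsub hUopen ⟨h1, h2, h3⟩

lemma sgn_trans {a b c : ℝ} (h1 : 0 < a * b) (h2 : 0 < b * c) : 0 < a * c := by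
  rcases mul_pos_iff.1 h1 with ⟨ha, hb⟩ | ⟨ha, hb⟩ <;>
    rcases mul_pos_iff.1 h2 with ⟨hb', hc⟩ | ⟨hb', hc⟩
  · exact mul_pos ha hc
  · linarith
  · linarith
  · exact mul_pos_of_neg_of_neg ha hc

lemma sameSide {p q cc : ℝ} {a b m m' : ℝ × ℝ}
    (ha : p * a.1 + q * a.2 = cc) (hb : p * b.1 + q * b.2 = cc)
    (hm : p * m.1 + q * m.2 < cc) (hm' : p * m'.1 + q * m'.2 < cc)
    (h1 : Dd a b m ≠ 0) (h2 : Dd a b m' ≠ 0) : 0 < Dd a b m * Dd a b m' := by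
  have key : Dd a b m * (cc - (p * m'.1 + q * m'.2)) =
      Dd a b m' * (cc - (p * m.1 + q * m.2)) := by
    unfold Dd
    linear_combination ((m.1 - a.1) * (m'.2 - a.2) - (m.2 - a.2) * (m'.1 - a.1)) * hb -
      (((m.1 - a.1) * (m'.2 - a.2) - (m.2 - a.2) * (m'.1 - a.1)) +
       ((b.1 - a.1) * (m.2 - a.2) - (b.2 - a.2) * (m.1 - a.1)) -
       ((b.1 - a.1) * (m'.2 - a.2) - (b.2 - a.2) * (m'.1 - a.1))) * ha
  have hs : 0 < cc - (p * m.1 + q * m.2) := by linarith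
  have hs' : 0 < cc - (p * m'.1 + q * m'.2) := by linarith
  have e : Dd a b m * Dd a b m' * (cc - (p * m.1 + q * m.2)) =
      Dd a b m ^ 2 * (cc - (p * m'.1 + q * m'.2)) := by
    linear_combination (-(Dd a b m)) * key
  nlinarith [mul_self_pos.2 h1, mul_pos (mul_self_pos.2 h1) hs']

lemma cramer_block {P1 P2 P3 z : ℝ × ℝ} {p q cc : ℝ}
    (hz : p * z.1 + q * z.2 = cc)
    (h1 : p * P1.1 + q * P1.2 ≤ cc) (h2 : p * P2.1 + q * P2.2 < cc)
    (h3 : p * P3.1 + q * P3.2 ≤ cc)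
    (s1 : 0 < Dd z P2 P3 * Dd P1 P2 P3) (s2 : 0 < Dd P1 z P3 * Dd P1 P2 P3)
    (s3 : 0 < Dd P1 P2 z * Dd P1 P2 P3) : False := by
  set Δ := Dd P1 P2 P3 with hΔ
  have key : Δ^2 * cc = (Dd z P2 P3 * Δ) * (p * P1.1 + q * P1.2) +
      (Dd P1 z P3 * Δ) * (p * P2.1 + q * P2.2) + (Dd P1 P2 z * Δ) * (p * P3.1 + q * P3.2) := by
    have c1 := vec_cramer₁ P1 P2 P3 z
    have c2 := vec_cramer₂ P1 P2 P3 z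
    linear_combination (-Δ^2) * hz + (Δ * p) * c1 + (Δ * q) * c2
  have hsum : Dd z P2 P3 * Δ + Dd P1 z P3 * Δ + Dd P1 P2 z * Δ = Δ^2 := by
    linear_combination (-Δ) * (Dd_four P1 P2 P3 z)
  have b1 : Dd z P2 P3 * Δ * (p * P1.1 + q * P1.2) ≤ Dd z P2 P3 * Δ * cc :=
    mul_le_mul_of_nonneg_left h1 s1.le
  have b2 : Dd P1 z P3 * Δ * (p * P2.1 + q * P2.2) < Dd P1 z P3 * Δ * cc :=
    (mul_lt_mul_iff_right₀ s2).2 h2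
  have b3 : Dd P1 P2 z * Δ * (p * P3.1 + q * P3.2) ≤ Dd P1 P2 z * Δ * cc :=
    mul_le_mul_of_nonneg_left h3 s3.le
  have hcc : Dd z P2 P3 * Δ * cc + Dd P1 z P3 * Δ * cc + Dd P1 P2 z * Δ * cc = Δ^2 * cc := by
    linear_combination cc * hsum
  linarith

section FinH

variable {d : ℕ}

lemma fcast_inj {s t : ℕ} (hs : s < d+3) (ht : t < d+3)
    (h : (s : Fin (d+3)) = (t : Fin (d+3))) : s = t := by
  have := congrArg Fin.val h
  rwa [Fin.val_natCast, Fin.val_natCast, Nat.mod_eq_of_lt hs, Nat.mod_eq_of_lt ht] at this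

lemma fcast_ne_zero {s : ℕ} (h0 : 0 < s) (h : s < d+3) : (s : Fin (d+3)) ≠ 0 := by
  intro he
  have : s = 0 := fcast_inj h (by omega) (by rw [he]; simp)
  omega

lemma fone_ne : (1 : Fin (d+3)) ≠ 0 := by
  simpa using fcast_ne_zero (d := d) (s := 1) one_pos (by omega)

lemma ftwo_ne : (2 : Fin (d+3)) ≠ 0 := by
  simpa using fcast_ne_zero (d := d) (s := 2) (by norm_num) (by omega)

lemma shift_ne (u : Fin (d+3)) {a : Fin (d+3)} (ha : a ≠ 0) : u + a ≠ u := by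
  intro h
  exact ha (by rwa [add_eq_left] at h)

end FinH

lemma sgn_conj {e x y : ℝ} (hx : 0 < e * x) (hy : 0 < e * y) : 0 < x * y :=
  sgn_trans (show (0:ℝ) < x * e by rwa [mul_comm]) hy

section Poly

variable {d : ℕ} {A : Fin (d+3) → ℝ × ℝ}

def HD (A : Fin (d+3) → ℝ × ℝ) : Prop :=
  ∀ i j k : Fin (d+3), i ≠ j → i ≠ k → j ≠ k → Dd (A i) (A j) (A k) ≠ 0

def HE (A : Fin (d+3) → ℝ × ℝ) : Prop :=
  ∀ k : Fin (d+3), ∃ p q cc : ℝ, p * (A k).1 + q * (A k).2 = cc ∧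
    p * (A (k+1)).1 + q * (A (k+1)).2 = cc ∧
    ∀ j, j ≠ k → j ≠ k + 1 → p * (A j).1 + q * (A j).2 < cc

def epsD (A : Fin (d+3) → ℝ × ℝ) : ℝ := Dd (A 0) (A 1) (A 2)

lemma one_ne_two' : (1 : Fin (d+3)) ≠ 2 := by
  have e : (1 : Fin (d+3)) + 1 = 2 := by ring
  intro h
  exact (shift_ne 1 fone_ne) (e.trans h.symm)

lemma epsD_ne (hD : HD A) : epsD A ≠ 0 :=
  hD 0 1 2 (Ne.symm fone_ne) (Ne.symm ftwo_ne) one_ne_two'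

lemma edge_pair (hD : HD A) (hE : HE A) {k m m' : Fin (d+3)} (hm1 : m ≠ k) (hm2 : m ≠ k+1)
    (hm'1 : m' ≠ k) (hm'2 : m' ≠ k+1) :
    0 < Dd (A k) (A (k+1)) (A m) * Dd (A k) (A (k+1)) (A m') := by
  obtain ⟨p, q, cc, e1, e2, e3⟩ := hE k
  have hk1 : k ≠ k + 1 := (shift_ne k fone_ne).symm
  exact sameSide e1 e2 (e3 m hm1 hm2) (e3 m' hm'1 hm'2)
    (hD k (k+1) m hk1 (Ne.symm hm1) (Ne.symm hm2))
    (hD k (k+1) m' hk1 (Ne.symm hm'1) (Ne.symm hm'2))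

lemma eps_step (hD : HD A) (hE : HE A) (k : Fin (d+3)) :
    0 < Dd (A k) (A (k+1)) (A (k+2)) * Dd (A (k+1)) (A (k+2)) (A (k+3)) := by
  have c1 : k + 1 + 1 = k + 2 := by ring
  have c2 : k + 1 + 2 = k + 3 := by ring
  have h := edge_pair (k := k+1) (m := k) (m' := k+3) hD hE
    (Ne.symm (shift_ne k fone_ne)) (by rw [c1]; exact Ne.symm (shift_ne k ftwo_ne))
    (by rw [show k + 3 = (k+1) + 2 by ring]; exact shift_ne (k+1) ftwo_ne)
    (by rw [c1, show k + 3 = (k+2) + 1 by ring]; exact shift_ne (k+2) fone_ne)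
  rw [c1] at h
  rw [Dd_cyc (A k) (A (k+1)) (A (k+2))]
  exact h

lemma eps_all (hD : HD A) (hE : HE A) (k : Fin (d+3)) :
    0 < epsD A * Dd (A k) (A (k+1)) (A (k+2)) := by
  have base : ∀ t : ℕ, 0 < epsD A *
      Dd (A (t : Fin (d+3))) (A ((t : Fin (d+3)) + 1)) (A ((t : Fin (d+3)) + 2)) := by
    intro t
    induction t with
    | zero =>
      simp only [Nat.cast_zero, zero_add]
      exact mul_self_pos.2 (epsD_ne hD)
    | succ t ih =>
      have hc : ((t+1 : ℕ) : Fin (d+3)) = (t : Fin (d+3)) + 1 := by push_cast; ring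
      rw [hc, show (t : Fin (d+3)) + 1 + 1 = (t : Fin (d+3)) + 2 by ring,
        show (t : Fin (d+3)) + 1 + 2 = (t : Fin (d+3)) + 3 by ring]
      exact sgn_trans ih (eps_step hD hE _)
  have h := base k.val
  rwa [Fin.cast_val_eq_self] at h

lemma edge_eps (hD : HD A) (hE : HE A) {k m : Fin (d+3)} (hm1 : m ≠ k) (hm2 : m ≠ k+1) :
    0 < epsD A * Dd (A k) (A (k+1)) (A m) := by
  have h1 := eps_all hD hE k
  have h2 := edge_pair (m := k+2) (m' := m) hD hE (shift_ne k ftwo_ne)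
    (by rw [show k + 2 = (k+1) + 1 by ring]; exact shift_ne (k+1) fone_ne) hm1 hm2
  exact sgn_trans h1 h2

lemma fcast_succ_ne {d : ℕ} {s tv : ℕ} (hs : 0 < s) (hstv : s < tv) (htv : tv < d+3) :
    (s : Fin (d+3)) ≠ (tv : Fin (d+3)) + 1 := by
  intro h
  have h' : (s : Fin (d+3)) = ((tv+1 : ℕ) : Fin (d+3)) := by push_cast; exact h
  by_cases hc : tv + 1 < d + 3
  · have := fcast_inj (by omega) hc h'
    omega
  · have he : tv + 1 = d + 3 := by omega
    rw [he] at h'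
    rw [Fin.natCast_self] at h'
    have := fcast_inj (by omega) (by omega) (h'.trans (Nat.cast_zero (R := Fin (d+3))).symm)
    omega

lemma chord (hD : HD A) (hE : HE A) {u v m : Fin (d+3)} (h1 : 0 < (m - u).val)
    (h2 : (m - u).val < (v - u).val) : 0 < epsD A * Dd (A u) (A m) (A v) := by
  set tv : ℕ := (v - u).val with htv
  have htvlt : tv < d + 3 := (v - u).isLt
  have hvu : v = u + (tv : Fin (d+3)) := by rw [htv, Fin.cast_val_eq_self]; ring
  have htvpos : 0 < tv := by omega
  have hvne : v ≠ u := by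
    intro h
    have : tv = 0 := by rw [htv, h, sub_self, Fin.val_zero]
    omega
  have main : ∀ s : ℕ, 1 ≤ s → s < tv →
      0 < epsD A * Dd (A u) (A (u + (s : Fin (d+3)))) (A v) := by
    intro s hs
    induction s, hs using Nat.le_induction with
    | base =>
      intro hlt
      rw [Nat.cast_one]
      apply edge_eps hD hE hvne
      intro h
      have e : (1 : Fin (d+3)) = (tv : Fin (d+3)) := add_left_cancel ((h.symm.trans hvu))
      have := fcast_inj (d := d) (s := 1) (by omega) htvlt (by rw [← e]; simp)
      omega
    | succ s hs ih =>
      intro hlt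
      have hstv : s < tv := by omega
      have hsd : s < d + 3 := by omega
      have IH := ih hstv
      by_contra hcon
      push_neg at hcon
      have hcs : ((s+1 : ℕ) : Fin (d+3)) = (s : Fin (d+3)) + 1 := by push_cast; ring
      have nz_s : (s : Fin (d+3)) ≠ 0 := fcast_ne_zero (by omega) hsd
      have nz_s1 : ((s+1 : ℕ) : Fin (d+3)) ≠ 0 := fcast_ne_zero (by omega) (by omega)
      have hne_uv : u ≠ v := hvne.symm
      have h_us_v : u + (s : Fin (d+3)) ≠ v := by
        rw [hvu]
        intro h
        have := fcast_inj hsd htvlt (add_left_cancel h)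
        omega
      have h_us1_v : u + ((s+1 : ℕ) : Fin (d+3)) ≠ v := by
        rw [hvu]
        intro h
        have := fcast_inj (by omega) htvlt (add_left_cancel h)
        omega
      have h_us_ne_u : u + (s : Fin (d+3)) ≠ u := shift_ne u nz_s
      have h_us1_ne_u : u + ((s+1 : ℕ) : Fin (d+3)) ≠ u := shift_ne u nz_s1
      have h_us_ne_us1 : u + (s : Fin (d+3)) ≠ u + ((s+1 : ℕ) : Fin (d+3)) := by
        intro h
        have := fcast_inj hsd (by omega) (add_left_cancel h)
        omega
      have hidx : u + (s : Fin (d+3)) + 1 = u + ((s+1 : ℕ) : Fin (d+3)) := by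
        rw [hcs]; ring
      obtain ⟨p, q, cc, e1, e2, e3⟩ := hE v
      -- L values
      have h1' : p * (A u).1 + q * (A u).2 ≤ cc := by
        by_cases hcase : u = v + 1
        · rw [hcase]; exact le_of_eq e2
        · exact (e3 u hne_uv hcase).le
      have h2' : p * (A (u + (s : Fin (d+3)))).1 + q * (A (u + (s : Fin (d+3)))).2 < cc := by
        apply e3 _ h_us_v
        rw [hvu]
        intro h
        have h'' : (s : Fin (d+3)) = (tv : Fin (d+3)) + 1 :=
          add_left_cancel (by rw [h]; ring)
        exact fcast_succ_ne (by omega) hstv htvlt h''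
      have h3' : p * (A (u + ((s+1:ℕ) : Fin (d+3)))).1 + q * (A (u + ((s+1:ℕ) : Fin (d+3)))).2
          ≤ cc := by
        apply le_of_lt
        apply e3 _ h_us1_v
        rw [hvu]
        intro h
        have h'' : ((s+1:ℕ) : Fin (d+3)) = (tv : Fin (d+3)) + 1 :=
          add_left_cancel (by rw [h]; ring)
        exact fcast_succ_ne (by omega) (by omega) htvlt h''
      -- sign facts
      have sA : 0 < epsD A * Dd (A (u + (s : Fin (d+3)))) (A (u + ((s+1:ℕ) : Fin (d+3)))) (A v) := by
        rw [← hidx]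
        exact edge_eps hD hE (Ne.symm h_us_v) (by rw [hidx]; exact Ne.symm h_us1_v)
      have sB : 0 < epsD A * Dd (A (u + (s : Fin (d+3)))) (A (u + ((s+1:ℕ) : Fin (d+3)))) (A u) := by
        rw [← hidx]
        exact edge_eps hD hE (Ne.symm h_us_ne_u) (by rw [hidx]; exact Ne.symm h_us1_ne_u)
      have hΔeps : 0 < epsD A * Dd (A u) (A (u + (s : Fin (d+3)))) (A (u + ((s+1:ℕ) : Fin (d+3)))) := by
        rw [Dd_cyc]
        exact sB
      have hDne : Dd (A u) (A (u + ((s+1:ℕ) : Fin (d+3)))) (A v) ≠ 0 :=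
        hD _ _ _ (Ne.symm h_us1_ne_u) hne_uv h_us1_v
      have hlt0 : epsD A * Dd (A u) (A (u + ((s+1:ℕ) : Fin (d+3)))) (A v) < 0 :=
        lt_of_le_of_ne hcon (mul_ne_zero (epsD_ne hD) hDne)
      have s1 : 0 < Dd (A v) (A (u + (s : Fin (d+3)))) (A (u + ((s+1:ℕ) : Fin (d+3)))) *
          Dd (A u) (A (u + (s : Fin (d+3)))) (A (u + ((s+1:ℕ) : Fin (d+3)))) := by
        apply sgn_conj _ hΔeps
        rw [Dd_cyc]
        exact sA
      have s2 : 0 < Dd (A u) (A v) (A (u + ((s+1:ℕ) : Fin (d+3)))) *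
          Dd (A u) (A (u + (s : Fin (d+3)))) (A (u + ((s+1:ℕ) : Fin (d+3)))) := by
        apply sgn_conj _ hΔeps
        rw [Dd_swap (A u) (A v)]
        nlinarith [hlt0]
      have s3 : 0 < Dd (A u) (A (u + (s : Fin (d+3)))) (A v) *
          Dd (A u) (A (u + (s : Fin (d+3)))) (A (u + ((s+1:ℕ) : Fin (d+3)))) := by
        exact sgn_conj IH hΔeps
      exact cramer_block e1 h1' h2' h3' s1 s2 s3
  have h := main (m - u).val h1 h2
  rw [Fin.cast_val_eq_self] at h
  rwa [show u + (m - u) = m by ring] at h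

end Poly

section MainHelpers

variable {d : ℕ}

lemma val_ne_of_ne {x y : Fin (d+3)} (h : x ≠ y) : x.val ≠ y.val := fun h' => h (Fin.ext h')

lemma arc_ne {u m : Fin (d+3)} (a : Fin (d+3)) (h : m ≠ u + a) : m - u ≠ a :=
  fun h' => h (by rw [← h']; ring)

lemma arc_pos {u m : Fin (d+3)} (h : m ≠ u) : 0 < (m - u).val := by
  have hne : m - u ≠ 0 := sub_ne_zero.mpr h
  have h0 : (m - u).val ≠ 0 := fun h0 => hne (Fin.ext (by simp [h0]))
  omega

lemma cast_d2 : ((d+2 : ℕ) : Fin (d+3)) = -1 := by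
  have h0 : ((d+3 : ℕ) : Fin (d+3)) = 0 := Fin.natCast_self _
  push_cast at h0 ⊢
  linear_combination h0

lemma cast_d1 : ((d+1 : ℕ) : Fin (d+3)) = -2 := by
  have h0 : ((d+3 : ℕ) : Fin (d+3)) = 0 := Fin.natCast_self _
  push_cast at h0 ⊢
  linear_combination h0

lemma val_neg_one : ((-1 : Fin (d+3))).val = d + 2 := by
  rw [← cast_d2, Fin.val_natCast, Nat.mod_eq_of_lt (by omega)]

lemma val_neg_two : ((-2 : Fin (d+3))).val = d + 1 := by
  rw [← cast_d1, Fin.val_natCast, Nat.mod_eq_of_lt (by omega)]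

lemma val_one' : ((1 : Fin (d+3))).val = 1 := by
  have : ((1:ℕ) : Fin (d+3)) = 1 := Nat.cast_one
  rw [← this, Fin.val_natCast, Nat.mod_eq_of_lt (by omega)]

lemma val_two' : ((2 : Fin (d+3))).val = 2 := by
  have : ((2:ℕ) : Fin (d+3)) = 2 := by push_cast; ring
  rw [← this, Fin.val_natCast, Nat.mod_eq_of_lt (by omega)]

lemma lin_eval (f : (ℝ × ℝ) →ₗ[ℝ] ℝ) (x : ℝ × ℝ) :
    f (1, 0) * x.1 + f (0, 1) * x.2 = f x := by
  have hx : x = x.1 • ((1:ℝ), (0:ℝ)) + x.2 • ((0:ℝ), (1:ℝ)) := by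
    apply Prod.ext <;> simp
  conv_rhs => rw [hx]
  simp only [map_add, map_smul, smul_eq_mul]
  ring

lemma pos_factor {a b : ℝ} (hab : 0 < a * b) (ha : 0 < a) : 0 < b := by
  rcases mul_pos_iff.1 hab with ⟨_, h⟩ | ⟨h', _⟩
  · exact h
  · linarith

lemma sgn_mix {e x y : ℝ} (hxy : 0 < x * y) (hey : 0 < e * y) : 0 < e * x :=
  sgn_trans hey (by rwa [mul_comm] at hxy)

end MainHelpers

lemma shift_ne_sub {d : ℕ} (u : Fin (d+3)) {a : Fin (d+3)} (ha : a ≠ 0) : u - a ≠ u :=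
  fun h => shift_ne u ha (sub_eq_iff_eq_add.1 h).symm

end

open scoped Fin.CommRing Fin.NatCast in
/-- Equivalence of Definitions 3.5 and 3.6: a white point `B` lies inside both boundary
triangles of the adjacent black vertices `A_i` and `A_{i+1}` if and only if `B` lies inside
every triangle `A_i A_{i+1} A_j` (`j ≠ i, i+1`) and inside no other triangle with black
vertices. -/
theorem stmt6 (d : ℕ) (X : TDiagram d) (i : Fin (d + 3)) (w : Fin (d + 1)) :
    (X.white w ∈ X.bTri i ∧ X.white w ∈ X.bTri (i + 1)) ↔
    ((∀ j : Fin (d + 3), j ≠ i → j ≠ i + 1 →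
        X.white w ∈ interior (convexHull ℝ {X.black i, X.black (i + 1), X.black j})) ∧
     (∀ p q r : Fin (d + 3), p ≠ q → p ≠ r → q ≠ r →
        X.white w ∈ interior (convexHull ℝ {X.black p, X.black q, X.black r}) →
        (i = p ∨ i = q ∨ i = r) ∧ (i + 1 = p ∨ i + 1 = q ∨ i + 1 = r))) := by
  set A : Fin (d+3) → ℝ × ℝ := X.black with hA
  set B : ℝ × ℝ := X.white w with hB
  have hD : HD A := by
    intro a b c hab hac hbc
    apply Dd_ne_of_not_collinear
    have := X.genPos (Sum.inl a) (Sum.inl b) (Sum.inl c) (by simpa) (by simpa) (by simpa)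
    simpa using this
  have hE : HE A := by
    intro k
    obtain ⟨f, cc, hf1, hf2, hf3⟩ := X.edgeOrder k
    exact ⟨f (1,0), f (0,1), cc, by rw [lin_eval]; exact hf1, by rw [lin_eval]; exact hf2,
      fun j hj1 hj2 => by rw [lin_eval]; exact hf3 j hj1 hj2⟩
  have hCol3 : ∀ a b c : Fin (d+3), a ≠ b → a ≠ c → b ≠ c →
      ¬ Collinear ℝ ({A a, A b, A c} : Set (ℝ × ℝ)) := by
    intro a b c hab hac hbc
    have := X.genPos (Sum.inl a) (Sum.inl b) (Sum.inl c) (by simpa) (by simpa) (by simpa)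
    simpa using this
  have hColB : ∀ a b : Fin (d+3), a ≠ b → ¬ Collinear ℝ ({A a, A b, B} : Set (ℝ × ℝ)) := by
    intro a b hab
    have := X.genPos (Sum.inl a) (Sum.inl b) (Sum.inr w) (by simpa) (by simp) (by simp)
    simpa using this
  set eps : ℝ := epsD A with heps
  -- index facts
  have hii1 : i + 1 ≠ i := shift_ne i fone_ne
  have hii2 : i + 2 ≠ i := shift_ne i ftwo_ne
  have hi21 : i + 2 ≠ i + 1 := by
    rw [show i + 2 = (i+1) + 1 by ring]; exact shift_ne (i+1) fone_ne
  have him1 : i - 1 ≠ i := shift_ne_sub i fone_ne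
  have him2 : i - 1 ≠ i + 1 := by
    intro h
    have h' := sub_eq_iff_eq_add.1 h
    rw [show i + 1 + 1 = i + 2 by ring] at h'
    exact (shift_ne i ftwo_ne) h'.symm
  have e1a : i - 1 + 1 = i := by ring
  have e2a : i + 1 - 1 = i := by ring
  have e2b : i + 1 + 1 = i + 2 := by ring
  have hT1col : ¬ Collinear ℝ ({A (i-1), A i, A (i+1)} : Set (ℝ × ℝ)) :=
    hCol3 _ _ _ him1 him2 hii1.symm
  have hT2col : ¬ Collinear ℝ ({A i, A (i+1), A (i+2)} : Set (ℝ × ℝ)) :=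
    hCol3 _ _ _ hii1.symm hii2.symm hi21.symm
  constructor
  · rintro ⟨hB1, hB2⟩
    unfold TDiagram.bTri at hB1 hB2
    rw [e2a, e2b] at hB2
    obtain ⟨t1a, t1b, t1c⟩ := (mem_int_tri hT1col).1 hB1
    obtain ⟨t2a, t2b, t2c⟩ := (mem_int_tri hT2col).1 hB2
    have hA1 : 0 < eps * Dd (A (i-1)) (A i) (A (i+1)) := by
      have h := edge_eps hD hE (k := i-1) (m := i+1) him2.symm.symm.symm
        (by rw [e1a]; exact hii1)
      rwa [e1a] at h
    have hA2 : 0 < eps * Dd (A i) (A (i+1)) (A (i+2)) := edge_eps hD hE hii2 hi21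
    have ec1 : 0 < eps * Dd B (A i) (A (i+1)) := sgn_mix t1a hA1
    have ec2 : 0 < eps * Dd (A (i-1)) B (A (i+1)) := sgn_mix t1b hA1
    have ec3 : 0 < eps * Dd (A (i-1)) (A i) B := sgn_mix t1c hA1
    have ed1 : 0 < eps * Dd B (A (i+1)) (A (i+2)) := sgn_mix t2a hA2
    have ed2 : 0 < eps * Dd (A i) B (A (i+2)) := sgn_mix t2b hA2
    have ed3 : 0 < eps * Dd (A i) (A (i+1)) B := sgn_mix t2c hA2
    constructor
    · intro j hj1 hj2
      have hT3col : ¬ Collinear ℝ ({A i, A (i+1), A j} : Set (ℝ × ℝ)) :=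
        hCol3 _ _ _ hii1.symm hj1.symm hj2.symm
      have hA3 : 0 < eps * Dd (A i) (A (i+1)) (A j) := edge_eps hD hE hj1 hj2
      -- claim 1 : B is on the correct side of the line A_{i+1} A_j
      have hφ2 : 0 < eps * Dd (A (i+1)) (A j) (A i) := by
        apply chord hD hE (arc_pos hj2)
        rw [show i - (i+1) = -1 by ring, val_neg_one]
        have hne : (j - (i+1)).val ≠ d + 2 := by
          have h := val_ne_of_ne (arc_ne (-1)
            (show j ≠ (i+1) + -1 by
              rw [show (i+1) + (-1 : Fin (d+3)) = i by ring]; exact hj1))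
          rwa [val_neg_one] at h
        have := (j - (i+1)).isLt
        omega
      have hφ1 : 0 ≤ eps * Dd (A (i+1)) (A j) (A (i-1)) := by
        by_cases hji : j = i - 1
        · rw [hji, Dd_self₂, mul_zero]
        · apply le_of_lt
          apply chord hD hE (arc_pos hj2)
          rw [show (i-1) - (i+1) = -2 by ring, val_neg_two]
          have hne1 : (j - (i+1)).val ≠ d + 1 := by
            have h := val_ne_of_ne (arc_ne (-2)
              (show j ≠ (i+1) + -2 by
                rw [show (i+1) + (-2 : Fin (d+3)) = i - 1 by ring]; exact hji))
            rwa [val_neg_two] at h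
          have hne2 : (j - (i+1)).val ≠ d + 2 := by
            have h := val_ne_of_ne (arc_ne (-1)
              (show j ≠ (i+1) + -1 by
                rw [show (i+1) + (-1 : Fin (d+3)) = i by ring]; exact hj1))
            rwa [val_neg_one] at h
          have := (j - (i+1)).isLt
          omega
      have key1 := Dd_key (A (i-1)) (A i) (A (i+1)) B (A (i+1)) (A j)
      rw [Dd_self₁ (A (i+1)) (A j), mul_zero, add_zero] at key1
      have claim1 : 0 < eps * Dd (A (i+1)) (A j) B := by
        apply pos_factor _ hA1
        have keye : (eps * Dd (A (i-1)) (A i) (A (i+1))) * (eps * Dd (A (i+1)) (A j) B) =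
            (eps * Dd B (A i) (A (i+1))) * (eps * Dd (A (i+1)) (A j) (A (i-1))) +
            (eps * Dd (A (i-1)) B (A (i+1))) * (eps * Dd (A (i+1)) (A j) (A i)) := by
          linear_combination (eps^2) * key1
        rw [keye]
        have p1 := mul_nonneg ec1.le hφ1
        have p2 := mul_pos ec2 hφ2
        linarith
      -- claim 2 : B is on the correct side of the line A_j A_i
      have hψ2 : 0 < eps * Dd (A j) (A i) (A (i+1)) := by
        rw [show Dd (A j) (A i) (A (i+1)) = Dd (A i) (A (i+1)) (A j) by rw [Dd_cyc]]
        exact hA3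
      have hψ3 : 0 ≤ eps * Dd (A j) (A i) (A (i+2)) := by
        by_cases hji2 : j = i + 2
        · rw [hji2, Dd_self₁, mul_zero]
        · apply le_of_lt
          rw [show Dd (A j) (A i) (A (i+2)) = Dd (A i) (A (i+2)) (A j) by rw [Dd_cyc]]
          apply chord hD hE (u := i) (m := i+2) (v := j)
          · rw [show i + 2 - i = (2 : Fin (d+3)) by ring, val_two']
            omega
          · rw [show i + 2 - i = (2 : Fin (d+3)) by ring, val_two']
            have hne0 : (j - i).val ≠ 0 := by
              have := arc_pos hj1; omega
            have hne1 : (j - i).val ≠ 1 := by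
              have h := val_ne_of_ne (arc_ne 1 (show j ≠ i + 1 from hj2))
              rwa [val_one'] at h
            have hne2 : (j - i).val ≠ 2 := by
              have h := val_ne_of_ne (arc_ne 2 (show j ≠ i + 2 from hji2))
              rwa [val_two'] at h
            omega
      have key2 := Dd_key (A i) (A (i+1)) (A (i+2)) B (A j) (A i)
      rw [Dd_self₂ (A j) (A i), mul_zero] at key2
      have claim2 : 0 < eps * Dd (A j) (A i) B := by
        apply pos_factor _ hA2
        have keye : (eps * Dd (A i) (A (i+1)) (A (i+2))) * (eps * Dd (A j) (A i) B) =
            (eps * Dd (A i) B (A (i+2))) * (eps * Dd (A j) (A i) (A (i+1))) +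
            (eps * Dd (A i) (A (i+1)) B) * (eps * Dd (A j) (A i) (A (i+2))) := by
          linear_combination (eps^2) * key2
        rw [keye]
        have p1 := mul_pos ed2 hψ2
        have p2 := mul_nonneg ed3.le hψ3
        linarith
      apply (mem_int_tri hT3col).2
      refine ⟨?_, ?_, ?_⟩
      · apply sgn_conj _ hA3
        rw [show Dd B (A (i+1)) (A j) = Dd (A (i+1)) (A j) B by rw [Dd_cyc, Dd_cyc]]
        exact claim1
      · apply sgn_conj _ hA3
        rw [show Dd (A i) B (A j) = Dd (A j) (A i) B by rw [Dd_cyc, Dd_cyc]]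
        exact claim2
      · exact sgn_conj ed3 hA3
    · intro p q r hpq hpr hqr hBin
      have hTcol : ¬ Collinear ℝ ({A p, A q, A r} : Set (ℝ × ℝ)) := hCol3 _ _ _ hpq hpr hqr
      obtain ⟨u1, u2, u3⟩ := (mem_int_tri hTcol).1 hBin
      have hΔ4 : Dd (A p) (A q) (A r) ≠ 0 := hD p q r hpq hpr hqr
      constructor
      · by_contra hni
        push_neg at hni
        obtain ⟨hip, hiq, hir⟩ := hni
        have hφB : 0 < eps * Dd (A (i+1)) (A (i-1)) B := by
          rw [show Dd (A (i+1)) (A (i-1)) B = Dd (A (i-1)) B (A (i+1)) by rw [Dd_cyc]]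
          exact ec2
        have hφle : ∀ m : Fin (d+3), m ≠ i → eps * Dd (A (i+1)) (A (i-1)) (A m) ≤ 0 := by
          intro m hmi
          by_cases h1 : m = i - 1
          · rw [h1, Dd_self₂, mul_zero]
          · by_cases h2 : m = i + 1
            · rw [h2, Dd_self₁, mul_zero]
            · have hc : 0 < eps * Dd (A (i+1)) (A m) (A (i-1)) := by
                apply chord hD hE (arc_pos h2)
                rw [show (i-1) - (i+1) = -2 by ring, val_neg_two]
                have hne1 : (m - (i+1)).val ≠ d + 1 := by
                  have h := val_ne_of_ne (arc_ne (-2)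
                    (show m ≠ (i+1) + -2 by
                      rw [show (i+1) + (-2 : Fin (d+3)) = i - 1 by ring]; exact h1))
                  rwa [val_neg_two] at h
                have hne2 : (m - (i+1)).val ≠ d + 2 := by
                  have h := val_ne_of_ne (arc_ne (-1)
                    (show m ≠ (i+1) + -1 by
                      rw [show (i+1) + (-1 : Fin (d+3)) = i by ring]; exact hmi))
                  rwa [val_neg_one] at h
                have := (m - (i+1)).isLt
                omega
              rw [Dd_swap (A (i+1)) (A (i-1)) (A m)]
              nlinarith [hc]
        have key := Dd_key (A p) (A q) (A r) B (A (i+1)) (A (i-1))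
        have keyE : (Dd (A p) (A q) (A r))^2 * (eps * Dd (A (i+1)) (A (i-1)) B) =
            (Dd B (A q) (A r) * Dd (A p) (A q) (A r)) * (eps * Dd (A (i+1)) (A (i-1)) (A p)) +
            (Dd (A p) B (A r) * Dd (A p) (A q) (A r)) * (eps * Dd (A (i+1)) (A (i-1)) (A q)) +
            (Dd (A p) (A q) B * Dd (A p) (A q) (A r)) * (eps * Dd (A (i+1)) (A (i-1)) (A r)) := by
          linear_combination (eps * Dd (A p) (A q) (A r)) * key
        have hL : 0 < (Dd (A p) (A q) (A r))^2 * (eps * Dd (A (i+1)) (A (i-1)) B) :=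
          mul_pos (by positivity) hφB
        have b1 : (Dd B (A q) (A r) * Dd (A p) (A q) (A r)) *
            (eps * Dd (A (i+1)) (A (i-1)) (A p)) ≤ 0 :=
          mul_nonpos_iff.2 (Or.inl ⟨u1.le, hφle p (Ne.symm hip)⟩)
        have b2 : (Dd (A p) B (A r) * Dd (A p) (A q) (A r)) *
            (eps * Dd (A (i+1)) (A (i-1)) (A q)) ≤ 0 :=
          mul_nonpos_iff.2 (Or.inl ⟨u2.le, hφle q (Ne.symm hiq)⟩)
        have b3 : (Dd (A p) (A q) B * Dd (A p) (A q) (A r)) *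
            (eps * Dd (A (i+1)) (A (i-1)) (A r)) ≤ 0 :=
          mul_nonpos_iff.2 (Or.inl ⟨u3.le, hφle r (Ne.symm hir)⟩)
        linarith
      · by_contra hni
        push_neg at hni
        obtain ⟨hip, hiq, hir⟩ := hni
        have hψB : 0 < eps * Dd (A (i+2)) (A i) B := by
          rw [show Dd (A (i+2)) (A i) B = Dd (A i) B (A (i+2)) by rw [Dd_cyc]]
          exact ed2
        have hψle : ∀ m : Fin (d+3), m ≠ i + 1 → eps * Dd (A (i+2)) (A i) (A m) ≤ 0 := by
          intro m hmi
          by_cases h1 : m = i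
          · rw [h1, Dd_self₂, mul_zero]
          · by_cases h2 : m = i + 2
            · rw [h2, Dd_self₁, mul_zero]
            · have hc : 0 < eps * Dd (A (i+2)) (A m) (A i) := by
                apply chord hD hE (arc_pos h2)
                rw [show i - (i+2) = -2 by ring, val_neg_two]
                have hne1 : (m - (i+2)).val ≠ d + 1 := by
                  have h := val_ne_of_ne (arc_ne (-2)
                    (show m ≠ (i+2) + -2 by
                      rw [show (i+2) + (-2 : Fin (d+3)) = i by ring]; exact h1))
                  rwa [val_neg_two] at h
                have hne2 : (m - (i+2)).val ≠ d + 2 := by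
                  have h := val_ne_of_ne (arc_ne (-1)
                    (show m ≠ (i+2) + -1 by
                      rw [show (i+2) + (-1 : Fin (d+3)) = i + 1 by ring]; exact hmi))
                  rwa [val_neg_one] at h
                have := (m - (i+2)).isLt
                omega
              rw [Dd_swap (A (i+2)) (A i) (A m)]
              nlinarith [hc]
        have key := Dd_key (A p) (A q) (A r) B (A (i+2)) (A i)
        have keyE : (Dd (A p) (A q) (A r))^2 * (eps * Dd (A (i+2)) (A i) B) =
            (Dd B (A q) (A r) * Dd (A p) (A q) (A r)) * (eps * Dd (A (i+2)) (A i) (A p)) +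
            (Dd (A p) B (A r) * Dd (A p) (A q) (A r)) * (eps * Dd (A (i+2)) (A i) (A q)) +
            (Dd (A p) (A q) B * Dd (A p) (A q) (A r)) * (eps * Dd (A (i+2)) (A i) (A r)) := by
          linear_combination (eps * Dd (A p) (A q) (A r)) * key
        have hL : 0 < (Dd (A p) (A q) (A r))^2 * (eps * Dd (A (i+2)) (A i) B) :=
          mul_pos (by positivity) hψB
        have b1 : (Dd B (A q) (A r) * Dd (A p) (A q) (A r)) *
            (eps * Dd (A (i+2)) (A i) (A p)) ≤ 0 :=
          mul_nonpos_iff.2 (Or.inl ⟨u1.le, hψle p (Ne.symm hip)⟩)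
        have b2 : (Dd (A p) B (A r) * Dd (A p) (A q) (A r)) *
            (eps * Dd (A (i+2)) (A i) (A q)) ≤ 0 :=
          mul_nonpos_iff.2 (Or.inl ⟨u2.le, hψle q (Ne.symm hiq)⟩)
        have b3 : (Dd (A p) (A q) B * Dd (A p) (A q) (A r)) *
            (eps * Dd (A (i+2)) (A i) (A r)) ≤ 0 :=
          mul_nonpos_iff.2 (Or.inl ⟨u3.le, hψle r (Ne.symm hir)⟩)
        linarith
  · rintro ⟨h1, _h2⟩
    constructor
    · have h := h1 (i-1) him1 him2
      unfold TDiagram.bTri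
      have hset : ({A i, A (i+1), A (i-1)} : Set (ℝ × ℝ)) = {A (i-1), A i, A (i+1)} := by
        ext y
        simp only [Set.mem_insert_iff, Set.mem_singleton_iff]
        tauto
      rwa [hset] at h
    · have h := h1 (i+2) hii2 hi21
      unfold TDiagram.bTri
      rw [e2a, e2b]
      exact h
end

section
/- Let X be a t-diagram with more than four points (d ≥ 1). If A_i is a black point and B is the white point lying in the boundary triangle A_{i-1}A_iA_{i+1}, then X \ {A_i, B} is again a t-diagram (with parameter d − 1). -/
/- ### Auxiliary lemmas -/

lemma frepTD (f : (ℝ×ℝ) →ₗ[ℝ] ℝ) (x y : ℝ) : f (x, y) = x * f (1,0) + y * f (0,1) := by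
  rw [show ((x:ℝ),(y:ℝ)) = x•((1:ℝ),(0:ℝ)) + y•((0:ℝ),(1:ℝ)) from by simp [Prod.ext_iff],
    map_add, map_smul, map_smul, smul_eq_mul, smul_eq_mul]

lemma frepTD' (f : (ℝ×ℝ) →ₗ[ℝ] ℝ) (z : ℝ×ℝ) : f z = z.1 * f (1,0) + z.2 * f (0,1) := by
  rw [← frepTD]

lemma collinear_of_detTD (p q r : ℝ×ℝ)
    (h : (q.1-p.1)*(r.2-p.2) = (q.2-p.2)*(r.1-p.1)) : Collinear ℝ {p,q,r} := by
  by_cases hq1 : q.1 = p.1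
  · by_cases hq2 : q.2 = p.2
    · have hqp : q = p := Prod.ext hq1 hq2
      subst hqp
      rw [Set.insert_comm, Set.insert_eq_self.2 (by simp)]
      exact collinear_pair ℝ q r
    · have hr1 : r.1 = p.1 := by
        have h0 : (q.2-p.2)*(r.1-p.1) = 0 := by rw [← h, hq1]; ring
        rcases mul_eq_zero.mp h0 with h'|h'
        · exact absurd (by linarith : q.2 = p.2) hq2
        · linarith
      rw [collinear_iff_of_mem (Set.mem_insert p _)]
      refine ⟨((0:ℝ),(1:ℝ)), fun x hx => ?_⟩
      simp only [Set.mem_insert_iff, Set.mem_singleton_iff] at hx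
      rcases hx with h'|h'|h' <;> subst h'
      · exact ⟨0, by simp⟩
      · exact ⟨x.2 - p.2, Prod.ext (by simpa using hq1) (by simp)⟩
      · exact ⟨x.2 - p.2, Prod.ext (by simpa using hr1) (by simp)⟩
  · rw [collinear_iff_of_mem (Set.mem_insert p _)]
    have hd : q.1 - p.1 ≠ 0 := fun h' => hq1 (by linarith)
    refine ⟨((1:ℝ), (q.2-p.2)/(q.1-p.1)), fun x hx => ?_⟩
    simp only [Set.mem_insert_iff, Set.mem_singleton_iff] at hx
    have key : ∀ x : ℝ×ℝ, (q.1-p.1)*(x.2-p.2) = (q.2-p.2)*(x.1-p.1) →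
        x = (x.1 - p.1) • ((1:ℝ), (q.2-p.2)/(q.1-p.1)) +ᵥ p := by
      intro x hx
      refine Prod.ext ?_ ?_
      · simp only [Prod.smul_fst, Prod.smul_snd, smul_eq_mul, Prod.fst_vadd, Prod.snd_vadd]
        show x.1 = (x.1 - p.1) * 1 + p.1
        ring
      · simp only [Prod.smul_fst, Prod.smul_snd, smul_eq_mul, Prod.fst_vadd, Prod.snd_vadd]
        show x.2 = (x.1 - p.1) * ((q.2-p.2)/(q.1-p.1)) + p.2
        field_simp
        linear_combination hx
    rcases hx with h'|h'|h' <;> subst h'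
    · exact ⟨0, by simp⟩
    · exact ⟨x.1 - p.1, key x (by ring)⟩
    · exact ⟨x.1 - p.1, key x (by linarith [h])⟩

lemma collinear_of_levelTD (f : (ℝ×ℝ) →ₗ[ℝ] ℝ) (p q x v : ℝ×ℝ)
    (h1 : f q = f p) (h2 : f x = f p) (hv : f v ≠ f p) : Collinear ℝ {p, q, x} := by
  set a := f (1,0) with ha
  set b := f (0,1) with hb
  have hab : ¬ (a = 0 ∧ b = 0) := by
    rintro ⟨h0a, h0b⟩
    apply hv
    rw [frepTD' f v, frepTD' f p, ← ha, ← hb, h0a, h0b]; ring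
  have e1 : a*(q.1-p.1) + b*(q.2-p.2) = 0 := by
    have := h1; rw [frepTD' f q, frepTD' f p] at this; linarith
  have e2 : a*(x.1-p.1) + b*(x.2-p.2) = 0 := by
    have := h2; rw [frepTD' f x, frepTD' f p] at this; linarith
  apply collinear_of_detTD
  by_cases hA : a = 0
  · have hB : b ≠ 0 := fun h => hab ⟨hA, h⟩
    have hq2 : q.2 - p.2 = 0 := by
      rw [hA, zero_mul, zero_add] at e1
      rcases mul_eq_zero.mp e1 with h'|h'
      · exact absurd h' hB
      · exact h'
    have hx2 : x.2 - p.2 = 0 := by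
      rw [hA, zero_mul, zero_add] at e2
      rcases mul_eq_zero.mp e2 with h'|h'
      · exact absurd h' hB
      · exact h'
    rw [show q.2 - p.2 = 0 from hq2, show x.2 - p.2 = 0 from hx2]; ring
  · have hq1 : q.1 - p.1 = -(b/a)*(q.2-p.2) := by field_simp; linarith
    have hx1 : x.1 - p.1 = -(b/a)*(x.2-p.2) := by field_simp; linarith
    rw [hq1, hx1]; ring

lemma exists_baryTD (p q r : ℝ×ℝ) (h : ¬ Collinear ℝ {p,q,r}) (x : ℝ×ℝ) :
    ∃ l1 l2 l3 : ℝ, l1 + l2 + l3 = 1 ∧ x = l1 • p + l2 • q + l3 • r := by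
  have hd : (q.1-p.1)*(r.2-p.2) - (q.2-p.2)*(r.1-p.1) ≠ 0 := by
    intro h0
    exact h (collinear_of_detTD p q r (by linarith))
  set D := (q.1-p.1)*(r.2-p.2) - (q.2-p.2)*(r.1-p.1) with hD
  refine ⟨1 - ((x.1-p.1)*(r.2-p.2) - (x.2-p.2)*(r.1-p.1))/D
        - ((q.1-p.1)*(x.2-p.2) - (q.2-p.2)*(x.1-p.1))/D,
      ((x.1-p.1)*(r.2-p.2) - (x.2-p.2)*(r.1-p.1))/D,
      ((q.1-p.1)*(x.2-p.2) - (q.2-p.2)*(x.1-p.1))/D, by ring, ?_⟩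
  refine Prod.ext ?_ ?_ <;>
    simp only [Prod.fst_add, Prod.snd_add, Prod.smul_fst, Prod.smul_snd, smul_eq_mul] <;>
    field_simp <;> ring

lemma fin_sub_one_neTD (d : ℕ) (i : Fin (d+3)) : i - 1 ≠ i := by
  intro h
  have h2 : i = i + 1 := by
    conv_lhs => rw [← sub_add_cancel i 1, h]
  have h3 := congrArg Fin.val (add_left_cancel (show i + 0 = i + 1 by rw [add_zero]; exact h2))
  simp at h3

lemma fin_ne_add_oneTD (d : ℕ) (i : Fin (d+3)) : i ≠ i + 1 := by
  intro h
  have h3 := congrArg Fin.val (add_left_cancel (show i + 0 = i + 1 by rw [add_zero]; exact h))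
  simp at h3

lemma fin_sub_one_ne_add_oneTD (d : ℕ) (i : Fin (d+3)) : i - 1 ≠ i + 1 := by
  intro h
  have h2 := congrArg (· + 1) h
  simp only [sub_add_cancel] at h2
  have h3 := congrArg Fin.val
    (add_left_cancel (show i + 0 = i + (1 + 1) by rw [add_zero, ← add_assoc]; exact h2))
  have h4 : ((1:Fin (d+3)) + 1) = 2 := by rfl
  rw [h4] at h3
  simp at h3
  rw [Nat.mod_eq_of_lt (by omega)] at h3; omega

lemma pos_of_mul_posTD {a b : ℝ} (hb : 0 < b) (h : 0 < a * b) : 0 < a := by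
  by_contra h'
  push_neg at h'
  nlinarith

lemma nonneg_of_mul_nonnegTD {a b : ℝ} (hb : 0 < b) (h : 0 ≤ a * b) : 0 ≤ a := by
  by_contra h'
  push_neg at h'
  nlinarith

lemma TDiagram.black_injective {d : ℕ} (X : TDiagram d) : Function.Injective X.black := by
  intro a b hab
  have : (Sum.elim X.black X.white) (Sum.inl a) = (Sum.elim X.black X.white) (Sum.inl b) := hab
  exact Sum.inl.inj (X.inj this)

lemma TDiagram.white_injective {d : ℕ} (X : TDiagram d) : Function.Injective X.white := by
  intro a b hab
  have : (Sum.elim X.black X.white) (Sum.inr a) = (Sum.elim X.black X.white) (Sum.inr b) := hab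
  exact Sum.inr.inj (X.inj this)

lemma TDiagram.noncolB {d : ℕ} (X : TDiagram d) (a b c : Fin (d+3))
    (h1 : a ≠ b) (h2 : a ≠ c) (h3 : b ≠ c) :
    ¬ Collinear ℝ {X.black a, X.black b, X.black c} := by
  have := X.genPos (Sum.inl a) (Sum.inl b) (Sum.inl c) (by simp [h1]) (by simp [h2]) (by simp [h3])
  simpa using this

lemma TDiagram.noncolW {d : ℕ} (X : TDiagram d) (a b : Fin (d+3)) (u : Fin (d+1))
    (h1 : a ≠ b) :
    ¬ Collinear ℝ {X.black a, X.black b, X.white u} := by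
  have := X.genPos (Sum.inl a) (Sum.inl b) (Sum.inr u) (by simp [h1]) (by simp) (by simp)
  simpa using this

lemma chordTD {d : ℕ} (X : TDiagram d) (i : Fin (d+3)) :
    ∃ f : (ℝ×ℝ) →ₗ[ℝ] ℝ, ∃ c : ℝ,
      f (X.black (i-1)) = c ∧ f (X.black (i+1)) = c ∧ c < f (X.black i) ∧
      ∀ k : Fin (d+3), k ≠ i-1 → k ≠ i → k ≠ i+1 → f (X.black k) < c := by
  obtain ⟨f1, c1, h11, h12, h13⟩ := X.edgeOrder (i-1)
  rw [sub_add_cancel] at h12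
  simp only [sub_add_cancel] at h13
  obtain ⟨f2, c2, h21, h22, h23⟩ := X.edgeOrder i
  set p := X.black (i-1) with hp
  set q := X.black i with hq
  set r := X.black (i+1) with hr
  set α := c1 - f1 r with hα'
  set β := c2 - f2 p with hβ'
  have hA := fin_sub_one_neTD d i
  have hB := fin_ne_add_oneTD d i
  have hC := fin_sub_one_ne_add_oneTD d i
  have hα : 0 < α := by
    have := h13 (i+1) (Ne.symm hC) (Ne.symm hB)
    rw [← hr] at this; simp only [hα']; linarith
  have hβ : 0 < β := by
    have := h23 (i-1) hA hC
    rw [← hp] at this; simp only [hβ']; linarith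
  refine ⟨β • f1 + α • f2, β*c1 + α*c2 - α*β, ?_, ?_, ?_, ?_⟩
  · simp only [LinearMap.add_apply, LinearMap.smul_apply, smul_eq_mul, ← hp, h11]
    have : f2 p = c2 - β := by simp [hβ']
    rw [this]; ring
  · simp only [LinearMap.add_apply, LinearMap.smul_apply, smul_eq_mul, ← hr, h22]
    have : f1 r = c1 - α := by simp [hα']
    rw [this]; ring
  · simp only [LinearMap.add_apply, LinearMap.smul_apply, smul_eq_mul, ← hq, h12, h21]
    nlinarith [mul_pos hα hβ]
  · intro k hk1 hk2 hk3
    by_contra hcon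
    push_neg at hcon
    have noncol : ¬ Collinear ℝ {p, q, r} := X.noncolB (i-1) i (i+1) hA hC hB
    obtain ⟨l1, l2, l3, hsum, hx⟩ := exists_baryTD p q r noncol (X.black k)
    have ev : ∀ g : (ℝ×ℝ) →ₗ[ℝ] ℝ, g (X.black k) = l1 * g p + l2 * g q + l3 * g r := by
      intro g; rw [hx]; simp [map_add, map_smul, smul_eq_mul]
    have e1 : f1 (X.black k) < c1 := h13 k hk1 hk2
    have hv1 := ev f1
    rw [h11, h12] at hv1
    have hfr : f1 r = c1 - α := by simp [hα']
    rw [hfr] at hv1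
    have hs1 : l1*c1 + l2*c1 + l3*c1 = c1 := by linear_combination c1 * hsum
    have hl3 : 0 < l3 := pos_of_mul_posTD hα (by linarith)
    have e2 : f2 (X.black k) < c2 := h23 k hk2 hk3
    have hv2 := ev f2
    rw [h21, h22] at hv2
    have hfp : f2 p = c2 - β := by simp [hβ']
    rw [hfp] at hv2
    have hs2 : l1*c2 + l2*c2 + l3*c2 = c2 := by linear_combination c2 * hsum
    have hl1 : 0 < l1 := pos_of_mul_posTD hβ (by linarith)
    have hv3a := ev (β • f1 + α • f2)
    simp only [LinearMap.add_apply, LinearMap.smul_apply, smul_eq_mul] at hv3a hcon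
    rw [h11, h12, h21, h22, hfp, hfr] at hv3a
    have hs3 : l1*(α*β) + l2*(α*β) + l3*(α*β) = α*β := by linear_combination (α*β) * hsum
    have hs4 : l1*(β*c1) + l2*(β*c1) + l3*(β*c1) = β*c1 := by linear_combination (β*c1) * hsum
    have hs5 : l1*(α*c2) + l2*(α*c2) + l3*(α*c2) = α*c2 := by linear_combination (α*c2) * hsum
    have hl2 : 0 ≤ l2 := by
      refine nonneg_of_mul_nonnegTD (mul_pos hα hβ) ?_
      nlinarith [hv3a, hcon, hs3, hs4, hs5]
    obtain ⟨fk, ck, hk1', hk2', hk3'⟩ := X.edgeOrder k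
    have vq : fk q < ck := by
      refine hk3' i (Ne.symm hk2) (fun h => hk1 ?_)
      rw [h]; exact (add_sub_cancel_right k 1).symm
    have vr : fk r < ck := by
      refine hk3' (i+1) (Ne.symm hk3) (fun h => hk2 (add_right_cancel h).symm)
    have vp : fk p ≤ ck := by
      by_cases h' : i - 1 = k + 1
      · rw [hp, h', hk2']
      · exact (hk3' (i-1) (Ne.symm hk1) h').le
    have hvk := ev fk
    rw [hk1'] at hvk
    have hs6 : l1*ck + l2*ck + l3*ck = ck := by linear_combination ck * hsum
    linarith [mul_pos hl3 (sub_pos.2 vr), mul_nonneg hl2 (sub_nonneg.2 vq.le),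
      mul_nonneg hl1.le (sub_nonneg.2 vp), hs6]

lemma earcutTD (A : ℝ×ℝ) (S : Set (ℝ×ℝ)) (hS : S.Nonempty) (f : (ℝ×ℝ) →ₗ[ℝ] ℝ) (c : ℝ)
    (hSf : ∀ y ∈ convexHull ℝ S, f y ≤ c) (hA : c < f A)
    (hchord : ∀ z ∈ convexHull ℝ (insert A S), f z = c → z ∈ convexHull ℝ S)
    (x : ℝ×ℝ) (hx : x ∈ convexHull ℝ (insert A S)) (hxf : f x < c) :
    x ∈ convexHull ℝ S := by
  rw [convexHull_insert hS, mem_convexJoin] at hx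
  obtain ⟨a', ha', y, hy, hseg⟩ := hx
  rw [Set.mem_singleton_iff] at ha'
  subst ha'
  obtain ⟨u, v, hu, hv, huv, hxe⟩ := hseg
  have hfy : f y ≤ c := hSf y hy
  have hfx : f x = u * f a' + v * f y := by
    rw [← hxe]; simp [map_add, map_smul, smul_eq_mul]
  have hu' : u = 1 - v := by linarith
  rw [hu'] at hfx
  have hD : 0 < f a' - f y := by linarith
  set t0 := (f a' - c)/(f a' - f y) with ht0
  have ht0pos : 0 < t0 := div_pos (by linarith) hD
  have htv : t0 < v := by
    rw [ht0, div_lt_iff₀ hD]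
    nlinarith [hfx, hxf]
  have hv1 : v ≤ 1 := by linarith
  have ht1 : t0 < 1 := htv.trans_le hv1
  set z := (1 - t0) • a' + t0 • y with hz
  have hzmem : z ∈ convexHull ℝ (insert a' S) := by
    refine (convex_convexHull ℝ (insert a' S))
      (subset_convexHull ℝ _ (Set.mem_insert _ _))
      (convexHull_mono (Set.subset_insert _ _) hy) (by linarith) ht0pos.le (by ring)
  have hfz : f z = c := by
    rw [hz]
    simp only [map_add, map_smul, smul_eq_mul]
    rw [ht0]
    field_simp
    ring
  have hzS : z ∈ convexHull ℝ S := hchord z hzmem hfz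
  set s' := (v - t0)/(1 - t0) with hs'
  have h1t : (0:ℝ) < 1 - t0 := by linarith
  have hs'0 : 0 ≤ s' := le_of_lt (div_pos (by linarith) h1t)
  have hs'1 : s' ≤ 1 := by
    rw [hs', div_le_one h1t]; linarith
  have hc1 : (1-s')*(1-t0) = u := by
    rw [hs', hu']; field_simp; ring
  have hc2 : (1-s')*t0 + s' = v := by
    rw [hs']; field_simp; ring
  have hxz : x = (1-s') • z + s' • y := by
    rw [← hxe, hz, smul_add, smul_smul, smul_smul, add_assoc, ← add_smul, hc1, hc2]
  rw [hxz]
  exact (convex_convexHull ℝ S) hzS hy (by linarith) hs'0 (by ring)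

/-- Lemma 3.4 (induction lemma for t-diagrams): if `X` is a t-diagram with parameter
`e + 1` (more than four points), `A_i` is a black point and `B` the white point lying in
its boundary triangle, then removing `A_i` and `B` yields again a t-diagram. -/
theorem stmt7 (e : ℕ) (X : TDiagram (e + 1)) (i : Fin (e + 1 + 3)) (w : Fin (e + 1 + 1))
    (hw : X.white w ∈ X.bTri i) :
    ∃ Y : TDiagram e,
      Set.range Y.black = Set.range X.black \ {X.black i} ∧
      Set.range Y.white = Set.range X.white \ {X.white w} := by
  classical
  -- ### Fin arithmetic infrastructure
  have hmod : ∀ a : ℕ, a < 2*(e+1+3) →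
      (a < (e+1+3) ∧ a % (e+1+3) = a) ∨ ((e+1+3) ≤ a ∧ a % (e+1+3) = a - (e+1+3)) := by
    intro a ha
    rcases lt_or_ge a (e+1+3) with h'|h'
    · exact Or.inl ⟨h', Nat.mod_eq_of_lt h'⟩
    · exact Or.inr ⟨h', by rw [Nat.mod_eq_sub_mod h', Nat.mod_eq_of_lt (by omega)]⟩
  have hmodeq : ∀ a b : ℕ, a < 2*(e+1+3) → b < 2*(e+1+3) →
      (a = b ∨ a + (e+1+3) = b ∨ b + (e+1+3) = a) → a % (e+1+3) = b % (e+1+3) := by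
    intro a b ha hb hab
    rcases hmod a ha with ⟨h1,h'⟩|⟨h1,h'⟩ <;> rcases hmod b hb with ⟨h2,h''⟩|⟨h2,h''⟩ <;> omega
  set g : Fin (e+3) → Fin (e+1+3) := fun j => i + ⟨j.val + 1, by omega⟩ with hgdef
  have hgval : ∀ j : Fin (e+3), (g j).val = (i.val + (j.val + 1)) % (e+1+3) := by
    intro j
    simp only [hgdef, Fin.add_def]
  have hgsmall : ∀ j : Fin (e+3), i.val + (j.val+1) < 2*(e+1+3) := by
    intro j; omega
  have hgne : ∀ j, g j ≠ i := by
    intro j h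
    have hv := congrArg Fin.val h
    rw [hgval] at hv
    rcases hmod _ (hgsmall j) with ⟨h1,h'⟩|⟨h1,h'⟩ <;> omega
  have hginj : Function.Injective g := by
    intro a b hab
    have hv := congrArg Fin.val hab
    rw [hgval, hgval] at hv
    apply Fin.ext
    rcases hmod _ (hgsmall a) with ⟨h1,h'⟩|⟨h1,h'⟩ <;>
      rcases hmod _ (hgsmall b) with ⟨h2,h''⟩|⟨h2,h''⟩ <;> omega
  have hv1' : ((1 : Fin (e+3)) : ℕ) = 1 := by simp
  have hvadd1 : ∀ k : Fin (e+1+3), (k+1).val = (k.val + 1) % (e+1+3) := by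
    intro k; rw [Fin.add_def]; simp
  have hvi1 : (i+1).val = (i.val + 1) % (e+1+3) := hvadd1 i
  have hvim : (i-1).val = (e+1+3 - 1 + i.val) % (e+1+3) := by rw [Fin.sub_def]; simp
  have hg0 : g 0 = i + 1 := by
    apply Fin.ext
    rw [hgval, hvi1]
    norm_num
  have hglast : ∀ j : Fin (e+3), j.val = e+2 → g j = i - 1 := by
    intro j hj
    apply Fin.ext
    rw [hgval, hvim, hj]
    congr 1
    omega
  have hwrap : ∀ j : Fin (e+3), j.val = e+2 → j + 1 = 0 := by
    intro j hj
    apply Fin.ext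
    rw [Fin.add_def]
    simp only [hv1', hj, Fin.val_zero]
    show (e+2+1) % (e+3) = 0
    rw [show e+2+1 = e+3 from rfl, Nat.mod_self]
  have hjsucc : ∀ j : Fin (e+3), j.val < e+2 → ((j+1 : Fin (e+3))).val = j.val + 1 := by
    intro j hj
    rw [Fin.add_def]
    simp only [hv1']
    exact Nat.mod_eq_of_lt (by omega)
  have hgsucc : ∀ j : Fin (e+3), j.val < e+2 → g (j+1) = g j + 1 := by
    intro j hj
    apply Fin.ext
    rw [hgval (j+1), hjsucc j hj, hvadd1 (g j), hgval j]
    rcases hmod _ (hgsmall j) with ⟨h1,h'⟩|⟨h1,h'⟩ <;> rw [h'] <;>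
      exact hmodeq _ _ (by omega) (by omega) (by omega)
  have hgsurj : ∀ k : Fin (e+1+3), k ≠ i → ∃ j : Fin (e+3), g j = k := by
    intro k hk
    have hkv : k.val ≠ i.val := fun h => hk (Fin.ext h)
    refine ⟨⟨if i.val < k.val then k.val - i.val - 1 else k.val + (e+3) - i.val,
      by split <;> omega⟩, ?_⟩
    apply Fin.ext
    rw [hgval]
    simp only
    split
    · have h1 : i.val + (k.val - i.val - 1 + 1) = k.val := by omega
      rw [h1]
      exact Nat.mod_eq_of_lt k.isLt
    · have h1 : i.val + (k.val + (e+3) - i.val + 1) = k.val + (e+1+3) := by omega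
      rw [h1, Nat.add_mod_right]
      exact Nat.mod_eq_of_lt k.isLt
  -- ### geometric setup
  have hA := fin_sub_one_neTD (e+1) i
  have hB := fin_ne_add_oneTD (e+1) i
  have hC := fin_sub_one_ne_add_oneTD (e+1) i
  have hbinj := X.black_injective
  have hwinj := X.white_injective
  obtain ⟨f1, c1, h11, h12, h13⟩ := X.edgeOrder (i-1)
  rw [sub_add_cancel] at h12
  simp only [sub_add_cancel] at h13
  obtain ⟨f2, c2, h21, h22, h23⟩ := X.edgeOrder i
  obtain ⟨f, c, hfp, hfr, hfq, hflt⟩ := chordTD X i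
  set p := X.black (i-1) with hp
  set q := X.black i with hq
  set r := X.black (i+1) with hr
  have noncol : ¬ Collinear ℝ {p, q, r} := X.noncolB (i-1) i (i+1) hA hC hB
  have hα : f1 r < c1 := h13 (i+1) (Ne.symm hC) (Ne.symm hB)
  have hβ : f2 p < c2 := h23 (i-1) hA hC
  -- the convex hull of all black points is inside all three halfplanes
  have hullf1 : ∀ x ∈ convexHull ℝ (Set.range X.black), f1 x ≤ c1 := by
    intro x hx
    refine convexHull_min ?_ (convex_halfSpace_le f1.isLinear c1) hx
    rintro _ ⟨k, rfl⟩
    by_cases hk1 : k = i - 1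
    · subst hk1; exact le_of_eq h11
    · by_cases hk2 : k = i
      · subst hk2; exact le_of_eq h12
      · exact (h13 k hk1 hk2).le
  have hullf2 : ∀ x ∈ convexHull ℝ (Set.range X.black), f2 x ≤ c2 := by
    intro x hx
    refine convexHull_min ?_ (convex_halfSpace_le f2.isLinear c2) hx
    rintro _ ⟨k, rfl⟩
    by_cases hk1 : k = i
    · subst hk1; exact le_of_eq h21
    · by_cases hk2 : k = i + 1
      · subst hk2; exact le_of_eq h22
      · exact (h23 k hk1 hk2).le
  have hfk_le : ∀ k : Fin (e+1+3), k ≠ i → f (X.black k) ≤ c := by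
    intro k hk
    by_cases hk1 : k = i - 1
    · subst hk1; exact le_of_eq hfp
    · by_cases hk2 : k = i + 1
      · subst hk2; exact le_of_eq hfr
      · exact (hflt k hk1 hk hk2).le
  -- the triangle hull is inside the halfplane f ≥ c
  have hullpr_ge : convexHull ℝ {p, q, r} ⊆ {x : ℝ×ℝ | c ≤ f x} := by
    refine convexHull_min ?_ (convex_halfSpace_ge f.isLinear c)
    rintro x (rfl|rfl|rfl)
    · exact le_of_eq hfp.symm
    · exact hfq.le
    · exact le_of_eq hfr.symm
  have hwtri : X.white w ∈ interior (convexHull ℝ {p, q, r}) := hw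
  -- f is strictly positive on the white point w
  have hfw : c < f (X.white w) := by
    have h0 : c ≤ f (X.white w) := hullpr_ge (interior_subset hwtri)
    rcases lt_or_eq_of_le h0 with h'|h'
    · exact h'
    · exact absurd (collinear_of_levelTD f p r (X.white w) q (hfr.trans hfp.symm) (by rw [hfp]; exact h'.symm) (by rw [hfp]; exact hfq.ne')) (X.noncolW (i-1) (i+1) w hC)
  -- the open triangle as an intersection of three open halfplanes
  have htri_sub : {x : ℝ×ℝ | f1 x < c1 ∧ f2 x < c2 ∧ c < f x} ⊆ convexHull ℝ {p, q, r} := by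
    intro x hx
    obtain ⟨hx1, hx2, hx3⟩ := hx
    obtain ⟨l1, l2, l3, hsum, hxe⟩ := exists_baryTD p q r noncol x
    have ev : ∀ g' : (ℝ×ℝ) →ₗ[ℝ] ℝ, g' x = l1 * g' p + l2 * g' q + l3 * g' r := by
      intro g'; rw [hxe]; simp [map_add, map_smul, smul_eq_mul]
    have hv1 := ev f1; rw [h11, h12] at hv1
    have hv2 := ev f2; rw [h21, h22] at hv2
    have hv3 := ev f; rw [hfp, hfr] at hv3
    have hs1 : l1*c1 + l2*c1 + l3*c1 = c1 := by linear_combination c1 * hsum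
    have hs2 : l1*c2 + l2*c2 + l3*c2 = c2 := by linear_combination c2 * hsum
    have hs3 : l1*c + l2*c + l3*c = c := by linear_combination c * hsum
    have hl3 : 0 < l3 := pos_of_mul_posTD (show (0:ℝ) < c1 - f1 r by linarith)
      (by linarith [hv1, hx1, hs1])
    have hl1 : 0 < l1 := pos_of_mul_posTD (show (0:ℝ) < c2 - f2 p by linarith)
      (by linarith [hv2, hx2, hs2])
    have hl2 : 0 < l2 := pos_of_mul_posTD (show (0:ℝ) < f q - c by linarith)
      (by linarith [hv3, hx3, hs3])
    -- now x is a strict convex combination of p, q, r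
    have hs : 0 < l2 + l3 := by linarith
    have hm : (l2/(l2+l3)) • q + (l3/(l2+l3)) • r ∈ convexHull ℝ {p, q, r} := by
      refine (convex_convexHull ℝ _)
        (subset_convexHull ℝ _ (by simp))
        (subset_convexHull ℝ _ (by simp))
        (by positivity) (by positivity) ?_
      field_simp
    have hmem := (convex_convexHull ℝ ({p, q, r} : Set (ℝ×ℝ)))
      (subset_convexHull ℝ _ (by simp : p ∈ ({p,q,r} : Set (ℝ×ℝ)))) hm
      hl1.le hs.le (by linarith)
    have e2 : (l2+l3) * (l2/(l2+l3)) = l2 := by field_simp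
    have e3 : (l2+l3) * (l3/(l2+l3)) = l3 := by field_simp
    have hxcomb : x = l1 • p + (l2+l3) • ((l2/(l2+l3)) • q + (l3/(l2+l3)) • r) := by
      rw [hxe, smul_add, smul_smul, smul_smul, e2, e3, add_assoc]
    rw [hxcomb]
    exact hmem
  have hUopen : IsOpen {x : ℝ×ℝ | f1 x < c1 ∧ f2 x < c2 ∧ c < f x} := by
    have o1 : IsOpen {x : ℝ×ℝ | f1 x < c1} :=
      isOpen_lt f1.continuous_of_finiteDimensional continuous_const
    have o2 : IsOpen {x : ℝ×ℝ | f2 x < c2} :=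
      isOpen_lt f2.continuous_of_finiteDimensional continuous_const
    have o3 : IsOpen {x : ℝ×ℝ | c < f x} :=
      isOpen_lt continuous_const f.continuous_of_finiteDimensional
    exact (o1.inter (o2.inter o3) : _)
  -- uniqueness of the white point in the boundary triangle
  obtain ⟨w0, hw0, hw0u⟩ := X.onePerTriangle (i-1) i (i+1) hA hC hB
  have hww0 : w = w0 := hw0u w hwtri
  -- every other white point is strictly below the chord
  have hBmain : ∀ u : Fin (e+1), X.white (w.succAbove u) ∈
      convexHull ℝ (Set.range X.black \ {X.black i}) := by
    intro u
    set B := X.white (w.succAbove u) with hBdef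
    have hne : w.succAbove u ≠ w := Fin.succAbove_ne w u
    have hBhull : B ∈ convexHull ℝ (Set.range X.black) := X.whiteInside _
    have hfB : f B < c := by
      rcases lt_trichotomy (f B) c with h'|h'|h'
      · exact h'
      · exact absurd (collinear_of_levelTD f p r B q (hfr.trans hfp.symm) (by rw [hfp]; exact h')
          (by rw [hfp]; exact hfq.ne')) (X.noncolW (i-1) (i+1) (w.succAbove u) hC)
      · -- B would be a second white point in the open boundary triangle
        exfalso
        have hb1 : f1 B < c1 := by
          rcases lt_or_eq_of_le (hullf1 B hBhull) with h''|h''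
          · exact h''
          · exact absurd (collinear_of_levelTD f1 p q B r (by rw [h11]; exact h12)
              (by rw [h11]; exact h'') (by rw [h11]; exact hα.ne)) (X.noncolW (i-1) i (w.succAbove u) hA)
        have hb2 : f2 B < c2 := by
          rcases lt_or_eq_of_le (hullf2 B hBhull) with h''|h''
          · exact h''
          · exact absurd (collinear_of_levelTD f2 q r B p (by rw [h21]; exact h22)
              (by rw [h21]; exact h'') (by rw [h21]; exact hβ.ne)) (X.noncolW i (i+1) (w.succAbove u) hB)
        have hBint : B ∈ interior (convexHull ℝ {p, q, r}) := by
          rw [mem_interior]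
          exact ⟨_, htri_sub, hUopen, ⟨hb1, hb2, h'⟩⟩
        have := hw0u (w.succAbove u) hBint
        exact hne (this.trans hww0.symm)
    -- cut off the ear at A_i
    have hins : insert (X.black i) (Set.range X.black \ {X.black i}) = Set.range X.black := by
      rw [Set.insert_diff_singleton]
      exact Set.insert_eq_self.2 (Set.mem_range_self i)
    have hSne : (Set.range X.black \ {X.black i}).Nonempty :=
      ⟨p, ⟨i-1, rfl⟩, hbinj.ne hA⟩
    have hSf : ∀ y ∈ convexHull ℝ (Set.range X.black \ {X.black i}), f y ≤ c := by
      intro y hy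
      refine convexHull_min ?_ (convex_halfSpace_le f.isLinear c) hy
      rintro _ ⟨⟨k, rfl⟩, hk2⟩
      refine hfk_le k (fun hki => ?_)
      subst hki
      exact hk2 rfl
    have hchord : ∀ z ∈ convexHull ℝ (insert (X.black i) (Set.range X.black \ {X.black i})),
        f z = c → z ∈ convexHull ℝ (Set.range X.black \ {X.black i}) := by
      intro z hz hfz
      rw [hins] at hz
      have hz1 := hullf1 z hz
      have hz2 := hullf2 z hz
      obtain ⟨l1, l2, l3, hsum, hze⟩ := exists_baryTD p q r noncol z
      have ev : ∀ g' : (ℝ×ℝ) →ₗ[ℝ] ℝ, g' z = l1 * g' p + l2 * g' q + l3 * g' r := by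
        intro g'; rw [hze]; simp [map_add, map_smul, smul_eq_mul]
      have hv1 := ev f1; rw [h11, h12] at hv1
      have hv2 := ev f2; rw [h21, h22] at hv2
      have hv3 := ev f; rw [hfp, hfr] at hv3
      have hs1 : l1*c1 + l2*c1 + l3*c1 = c1 := by linear_combination c1 * hsum
      have hs2 : l1*c2 + l2*c2 + l3*c2 = c2 := by linear_combination c2 * hsum
      have hs3 : l1*c + l2*c + l3*c = c := by linear_combination c * hsum
      have hl2 : l2 = 0 := by
        have h0 : l2 * (f q - c) = 0 := by rw [hfz] at hv3; linarith
        rcases mul_eq_zero.mp h0 with h'|h'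
        · exact h'
        · linarith
      have hl3 : 0 ≤ l3 := nonneg_of_mul_nonnegTD (show (0:ℝ) < c1 - f1 r by linarith)
        (by linarith [hv1, hz1, hs1])
      have hl1 : 0 ≤ l1 := nonneg_of_mul_nonnegTD (show (0:ℝ) < c2 - f2 p by linarith)
        (by linarith [hv2, hz2, hs2])
      have hze' : z = l1 • p + l3 • r := by
        rw [hze, hl2]; simp
      rw [hze']
      refine (convex_convexHull ℝ (Set.range X.black \ {X.black i}))
        (subset_convexHull ℝ (Set.range X.black \ {X.black i}) ⟨⟨i-1, rfl⟩, hbinj.ne hA⟩)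
        (subset_convexHull ℝ (Set.range X.black \ {X.black i}) ⟨⟨i+1, rfl⟩, hbinj.ne hB.symm⟩)
        hl1 hl3 (by linarith)
    refine earcutTD (X.black i) (Set.range X.black \ {X.black i}) hSne f c hSf ?_ hchord B ?_ hfB
    · exact hfq
    · rw [hins]; exact hBhull
  -- ranges of the new families
  have hrangeB : Set.range (fun j => X.black (g j)) = Set.range X.black \ {X.black i} := by
    ext x
    constructor
    · rintro ⟨j, rfl⟩
      exact ⟨Set.mem_range_self _, by simp; exact hbinj.ne (hgne j)⟩
    · rintro ⟨⟨k, rfl⟩, hk⟩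
      have hki : k ≠ i := by
        intro h; subst h; exact hk rfl
      obtain ⟨j, hj⟩ := hgsurj k hki
      exact ⟨j, by show X.black (g j) = X.black k; rw [hj]⟩
  have hrangeW : Set.range (fun u => X.white (w.succAbove u)) =
      Set.range X.white \ {X.white w} := by
    ext x
    constructor
    · rintro ⟨u, rfl⟩
      exact ⟨Set.mem_range_self _, by simp; exact hwinj.ne (Fin.succAbove_ne w u)⟩
    · rintro ⟨⟨m, rfl⟩, hm⟩
      have hmw : m ≠ w := by
        intro h; subst h; exact hm rfl
      obtain ⟨u, hu⟩ := Fin.exists_succAbove_eq hmw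
      exact ⟨u, by show X.white (w.succAbove u) = X.white m; rw [hu]⟩
  -- the composed indexing
  have hcomp : ∀ x : Fin (e+3) ⊕ Fin (e+1),
      Sum.elim (fun j => X.black (g j)) (fun u => X.white (w.succAbove u)) x =
      Sum.elim X.black X.white (Sum.map g w.succAbove x) := by
    rintro (j|u) <;> rfl
  have hmapinj : Function.Injective (Sum.map g (w.succAbove : Fin (e+1) → Fin (e+1+1))) :=
    Function.Injective.sumMap hginj Fin.succAbove_right_injective
  -- ### construction of the smaller diagram
  refine ⟨⟨fun j => X.black (g j), fun u => X.white (w.succAbove u), ?_, ?_, ?_, ?_, ?_⟩, ?_, ?_⟩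
  · -- inj
    intro x y hxy
    apply hmapinj
    apply X.inj
    rw [← hcomp, ← hcomp]
    exact hxy
  · -- genPos
    intro x y z hxy hxz hyz
    rw [hcomp x, hcomp y, hcomp z]
    exact X.genPos _ _ _ (hmapinj.ne hxy) (hmapinj.ne hxz) (hmapinj.ne hyz)
  · -- edgeOrder
    intro j
    by_cases hj : j.val < e + 2
    · obtain ⟨fj, cj, hj1, hj2, hj3⟩ := X.edgeOrder (g j)
      refine ⟨fj, cj, hj1, ?_, ?_⟩
      · show fj (X.black (g (j+1))) = cj
        rw [hgsucc j hj]
        exact hj2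
      · intro m hm1 hm2
        refine hj3 (g m) (hginj.ne hm1) ?_
        rw [← hgsucc j hj]
        exact hginj.ne hm2
    · have hjv : j.val = e + 2 := by omega
      refine ⟨f, c, ?_, ?_, ?_⟩
      · show f (X.black (g j)) = c
        rw [hglast j hjv]
        exact hfp
      · show f (X.black (g (j+1))) = c
        rw [hwrap j hjv, hg0]
        exact hfr
      · intro m hm1 hm2
        rw [hwrap j hjv] at hm2
        refine hflt (g m) ?_ (hgne m) ?_
        · intro h
          exact hm1 (hginj (h.trans (hglast j hjv).symm))
        · intro h
          exact hm2 (hginj (h.trans hg0.symm))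
  · -- whiteInside
    intro u
    show X.white (w.succAbove u) ∈ convexHull ℝ (Set.range (fun j => X.black (g j)))
    rw [hrangeB]
    exact hBmain u
  · -- onePerTriangle
    intro j1 j2 j3 h12' h13' h23'
    obtain ⟨m0, hm0, hm0u⟩ := X.onePerTriangle (g j1) (g j2) (g j3)
      (hginj.ne h12') (hginj.ne h13') (hginj.ne h23')
    have hm0ne : m0 ≠ w := by
      intro h
      subst h
      -- the white point w is strictly above the chord, the triangle is below it
      have hsub : convexHull ℝ {X.black (g j1), X.black (g j2), X.black (g j3)} ⊆
          {x : ℝ×ℝ | f x ≤ c} := by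
        refine convexHull_min ?_ (convex_halfSpace_le f.isLinear c)
        rintro x (rfl|rfl|rfl)
        · exact hfk_le _ (hgne j1)
        · exact hfk_le _ (hgne j2)
        · exact hfk_le _ (hgne j3)
      have := hsub (interior_subset hm0)
      exact absurd hfw (by simpa using not_lt.2 this)
    obtain ⟨u0, hu0⟩ := Fin.exists_succAbove_eq hm0ne
    refine ⟨u0, ?_, ?_⟩
    · show X.white (w.succAbove u0) ∈ _
      rw [hu0]
      exact hm0
    · intro u' hu'
      have := hm0u (w.succAbove u') hu'
      exact Fin.succAbove_right_injective (this.trans hu0.symm)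
  · exact hrangeB
  · exact hrangeW
end

section
/- If a white point B of a t-diagram lies inside the boundary triangle A_{i-1}A_iA_{i+1} (corresponds to A_i), then B lies inside a triangle with black vertices only if one of that triangle's vertices is A_i. -/
/-- Remark 3.3: if a white point `B` of a t-diagram lies inside the boundary triangle
`A_{i-1} A_i A_{i+1}`, then `B` lies inside a triangle with black vertices only if one
of that triangle's vertices is `A_i`. -/
theorem stmt8 (d : ℕ) (X : TDiagram d) (i : Fin (d + 3)) (w : Fin (d + 1))
    (hw : X.white w ∈ X.bTri i) :
    ∀ p q r : Fin (d + 3), p ≠ q → p ≠ r → q ≠ r →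
      X.white w ∈ interior (convexHull ℝ {X.black p, X.black q, X.black r}) →
      p = i ∨ q = i ∨ r = i := by
  intro p q r hpq hpr hqr hmem
  by_contra hcon
  push_neg at hcon
  obtain ⟨hp, hq, hr⟩ := hcon
  -- Fin arithmetic facts
  have hd1 : i - 1 ≠ i := by
    rw [Ne, sub_eq_self]
    intro h
    have := congrArg Fin.val h
    simp [Fin.val_one] at this
  have hd2 : i ≠ i + 1 := by
    rw [Ne, left_eq_add]
    intro h
    have := congrArg Fin.val h
    simp [Fin.val_one] at this
  have hd3 : i - 1 ≠ i + 1 := by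
    rw [Ne, sub_eq_iff_eq_add, add_assoc, left_eq_add]
    intro h
    have h2 := congrArg Fin.val h
    rw [Fin.val_add, Fin.val_one, Fin.val_zero, Nat.mod_eq_of_lt (by omega)] at h2
    omega
  have hsub : i - 1 + 1 = i := sub_add_cancel i 1
  -- the affine basis from the boundary triangle
  have hcol : ¬ Collinear ℝ {X.black (i - 1), X.black i, X.black (i + 1)} := by
    have := X.genPos (Sum.inl (i - 1)) (Sum.inl i) (Sum.inl (i + 1))
      (by simp [hd1]) (by simp [hd3]) (by simp [hd2])
    simpa using this
  have hai : AffineIndependent ℝ ![X.black (i - 1), X.black i, X.black (i + 1)] :=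
    affineIndependent_iff_not_collinear_set.2 hcol
  have htot : affineSpan ℝ (Set.range ![X.black (i - 1), X.black i, X.black (i + 1)]) = ⊤ := by
    rw [hai.affineSpan_eq_top_iff_card_eq_finrank_add_one]
    simp
  let b : AffineBasis (Fin 3) ℝ (ℝ × ℝ) := ⟨![X.black (i - 1), X.black i, X.black (i + 1)], hai, htot⟩
  have hb0 : b 0 = X.black (i - 1) := rfl
  have hb1 : b 1 = X.black i := rfl
  have hb2 : b 2 = X.black (i + 1) := rfl
  have hcoe : ⇑b = ![X.black (i - 1), X.black i, X.black (i + 1)] := rfl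
  have hrange : ({X.black (i - 1), X.black i, X.black (i + 1)} : Set (ℝ × ℝ)) = Set.range ⇑b := by
    rw [hcoe]
    ext x
    simp [Matrix.range_cons, Matrix.range_empty]
    tauto
  -- expansion of linear maps through barycentric coordinates
  have expand : ∀ (f : (ℝ × ℝ) →ₗ[ℝ] ℝ) (x : ℝ × ℝ),
      f x = b.coord 0 x * f (b 0) + b.coord 1 x * f (b 1) + b.coord 2 x * f (b 2) := by
    intro f x
    conv_lhs => rw [← b.linear_combination_coord_eq_self x]
    rw [map_sum, Fin.sum_univ_three]
    simp [smul_eq_mul]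
  have sumcoord : ∀ x : ℝ × ℝ, b.coord 0 x + b.coord 1 x + b.coord 2 x = 1 := by
    intro x
    have := b.sum_coord_apply_eq_one x
    rwa [Fin.sum_univ_three] at this
  -- coord 2 is positive at every black point other than i-1, i
  have hpos2 : ∀ j : Fin (d + 3), j ≠ i - 1 → j ≠ i → 0 < b.coord 2 (X.black j) := by
    intro j hj1 hj2
    obtain ⟨f, c, hf1, hf2, hflt⟩ := X.edgeOrder (i - 1)
    rw [hsub] at hf2 hflt
    have hv2 : f (X.black (i + 1)) < c := hflt _ hd3.symm hd2.symm
    have hvj : f (X.black j) < c := hflt _ hj1 hj2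
    have he := expand f (X.black j)
    rw [hb0, hb1, hb2, hf1, hf2] at he
    have hs := sumcoord (X.black j)
    by_contra hcc
    push_neg at hcc
    have : b.coord 2 (X.black j) * f (X.black (i + 1)) ≥ b.coord 2 (X.black j) * c :=
      mul_le_mul_of_nonpos_left hv2.le hcc
    have hsc : b.coord 0 (X.black j) * c + b.coord 1 (X.black j) * c
        + b.coord 2 (X.black j) * c = c := by
      have h' := congrArg (fun t => t * c) hs
      simpa [add_mul] using h'
    linarith
  -- coord 0 is positive at every black point other than i, i+1
  have hpos0 : ∀ j : Fin (d + 3), j ≠ i → j ≠ i + 1 → 0 < b.coord 0 (X.black j) := by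
    intro j hj1 hj2
    obtain ⟨f, c, hf1, hf2, hflt⟩ := X.edgeOrder i
    have hv0 : f (X.black (i - 1)) < c := hflt _ hd1 hd3
    have hvj : f (X.black j) < c := hflt _ hj1 hj2
    have he := expand f (X.black j)
    rw [hb0, hb1, hb2, hf1, hf2] at he
    have hs := sumcoord (X.black j)
    by_contra hcc
    push_neg at hcc
    have : b.coord 0 (X.black j) * f (X.black (i - 1)) ≥ b.coord 0 (X.black j) * c :=
      mul_le_mul_of_nonpos_left hv0.le hcc
    have hsc : b.coord 0 (X.black j) * c + b.coord 1 (X.black j) * c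
        + b.coord 2 (X.black j) * c = c := by
      have h' := congrArg (fun t => t * c) hs
      simpa [add_mul] using h'
    linarith
  -- the key separation: coord 1 is negative at every black point other than i-1, i, i+1
  have hneg1 : ∀ j : Fin (d + 3), j ≠ i - 1 → j ≠ i → j ≠ i + 1 →
      b.coord 1 (X.black j) < 0 := by
    intro j hj1 hj2 hj3
    by_contra hcc
    push_neg at hcc
    obtain ⟨f, c, hf1, hf2, hflt⟩ := X.edgeOrder j
    have hij1 : i ≠ j + 1 := by
      intro he; exact hj1 (by rw [he]; simp [add_sub_cancel_right])
    have hv0 : f (X.black (i - 1)) ≤ c := by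
      rcases eq_or_ne (i - 1) (j + 1) with he | he
      · rw [he, hf2]
      · exact (hflt _ hj1.symm he).le
    have hv1 : f (X.black i) < c := hflt _ hj2.symm hij1
    have hv2 : f (X.black (i + 1)) < c := hflt _ hj3.symm (fun he => hj2 (by
      have := congrArg (· - 1) he
      simpa [add_sub_cancel_right] using this.symm))
    have hc0 : 0 < b.coord 0 (X.black j) := hpos0 j hj2 hj3
    have hc2 : 0 < b.coord 2 (X.black j) := hpos2 j hj1 hj2
    have he := expand f (X.black j)
    rw [hb0, hb1, hb2, hf1] at he
    have hs := sumcoord (X.black j)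
    have t0 : b.coord 0 (X.black j) * f (X.black (i - 1)) ≤ b.coord 0 (X.black j) * c :=
      mul_le_mul_of_nonneg_left hv0 hc0.le
    have t1 : b.coord 1 (X.black j) * f (X.black i) ≤ b.coord 1 (X.black j) * c :=
      mul_le_mul_of_nonneg_left hv1.le hcc
    have t2 : b.coord 2 (X.black j) * f (X.black (i + 1)) < b.coord 2 (X.black j) * c :=
      mul_lt_mul_of_pos_left hv2 hc2
    have hsc : b.coord 0 (X.black j) * c + b.coord 1 (X.black j) * c
        + b.coord 2 (X.black j) * c = c := by
      have h' := congrArg (fun t => t * c) hs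
      simpa [add_mul] using h'
    linarith
  -- coord 1 of the white point is positive
  have hwpos : 0 < b.coord 1 (X.white w) := by
    have hw' := hw
    rw [TDiagram.bTri, hrange, b.interior_convexHull] at hw'
    exact hw' 1
  -- coord 1 is ≤ 0 on each vertex of the triangle pqr
  have hvert : ∀ j : Fin (d + 3), j ≠ i → b.coord 1 (X.black j) ≤ 0 := by
    intro j hj
    rcases eq_or_ne j (i - 1) with he | he1
    · rw [he, ← hb0]; rw [b.coord_apply_ne (by decide)]
    rcases eq_or_ne j (i + 1) with he | he2
    · rw [he, ← hb2]; rw [b.coord_apply_ne (by decide)]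
    exact (hneg1 j he1 hj he2).le
  -- hence ≤ 0 on the convex hull, contradicting positivity at the white point
  have hsubset : convexHull ℝ {X.black p, X.black q, X.black r} ⊆
      {x : ℝ × ℝ | b.coord 1 x ≤ 0} := by
    apply convexHull_min
    · rintro x (rfl | rfl | rfl)
      · exact hvert p hp
      · exact hvert q hq
      · exact hvert r hr
    · have : {x : ℝ × ℝ | b.coord 1 x ≤ 0} = (b.coord 1) ⁻¹' Set.Iic 0 := rfl
      rw [this]
      exact (convex_Iic (0 : ℝ)).affine_preimage (b.coord 1)
  have : b.coord 1 (X.white w) ≤ 0 := hsubset (interior_subset hmem)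
  linarith
end
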